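/- arXiv:1011.3273 — 3 statements merged into one kernel-verified Lean document; each statement's English description precedes it below -/
import Mathlib

section
/- Let d ≥ 2 be an integer and α ∈ (1, 2). If f : ℝ^d → ℝ is a measurable function belonging to the Kato class K_{d,α-1}, then lim_{t ↓ 0} sup_{x ∈ ℝ^d} ∫_0^t ∫_{ℝ^d} min( s^{-d/α}, s / |x-y|^{d+α} ) · |f(y)| dy ds = 0. -/
open MeasureTheory Metric Set Filter ENNReal Topology

/-- The Kato norm `M^α_f(r) = sup_{x ∈ ℝ^d} ∫_{B(x,r)} |f(y)| / |x-y|^{d+1-α} dy`. -/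
noncomputable def katoM (d : ℕ) (α : ℝ) (f : EuclideanSpace ℝ (Fin d) → ℝ) (r : ℝ) : ℝ≥0∞ :=
  ⨆ x : EuclideanSpace ℝ (Fin d),
    ∫⁻ y in Metric.ball x r, ENNReal.ofReal (|f y| / dist x y ^ ((d : ℝ) + 1 - α))

/-- `f` belongs to the Kato class `K_{d,α-1}` if `M^α_f(r) → 0` as `r ↓ 0`. -/
def KatoClass (d : ℕ) (α : ℝ) (f : EuclideanSpace ℝ (Fin d) → ℝ) : Prop :=
  Filter.Tendsto (katoM d α f) (nhdsWithin 0 (Set.Ioi 0)) (nhds 0)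


lemma min_le_rpow_interp {a b θ : ℝ} (ha : 0 < a) (hb : 0 < b) (h0 : 0 ≤ θ) (h1 : θ ≤ 1) :
    min a b ≤ a ^ θ * b ^ (1 - θ) := by
  have hsum : θ + (1 - θ) = 1 := by ring
  rcases le_total a b with h | h
  · calc min a b = a ^ θ * a ^ (1 - θ) := by
          rw [← Real.rpow_add ha, hsum, Real.rpow_one, min_eq_left h]
    _ ≤ a ^ θ * b ^ (1 - θ) :=
        mul_le_mul_of_nonneg_left (Real.rpow_le_rpow ha.le h (by linarith))
          (Real.rpow_nonneg ha.le θ)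
  · calc min a b = b ^ θ * b ^ (1 - θ) := by
          rw [← Real.rpow_add hb, hsum, Real.rpow_one, min_eq_right h]
    _ ≤ a ^ θ * b ^ (1 - θ) :=
        mul_le_mul_of_nonneg_right (Real.rpow_le_rpow hb.le h h0)
          (Real.rpow_nonneg hb.le _)

lemma near_bound {d : ℕ} {α s r F : ℝ} (hd : 2 ≤ d) (hα1 : 1 < α) (hα2 : α < 2)
    (hs : 0 < s) (hr : 0 ≤ r) (hF : 0 ≤ F) :
    min (s ^ (-(d : ℝ) / α)) (s / r ^ ((d : ℝ) + α)) * F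
      ≤ s ^ (1 / α - 1) * (F / r ^ ((d : ℝ) + 1 - α)) := by
  have hd2 : (2 : ℝ) ≤ d := by exact_mod_cast hd
  have hα0 : 0 < α := by linarith
  have hq : 0 < (d : ℝ) + α := by linarith
  have hp : 0 < (d : ℝ) + 1 - α := by linarith
  rcases eq_or_lt_of_le hr with h0 | hr0
  · have hr' : r = 0 := h0.symm
    subst hr'
    rw [Real.zero_rpow hq.ne', Real.zero_rpow hp.ne']
    rw [_root_.div_zero, _root_.div_zero, mul_zero,
      min_eq_right (Real.rpow_nonneg hs.le _), zero_mul]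
  · set θ : ℝ := (2 * α - 1) / ((d : ℝ) + α) with hθ
    have hθ0 : 0 ≤ θ := div_nonneg (by linarith) hq.le
    have hθ1 : θ ≤ 1 := by rw [div_le_one hq]; linarith
    have key := min_le_rpow_interp (Real.rpow_pos_of_pos hs (-(d : ℝ) / α))
      (div_pos hs (Real.rpow_pos_of_pos hr0 ((d : ℝ) + α))) hθ0 hθ1
    have e1 : (s ^ (-(d : ℝ) / α)) ^ θ = s ^ (-(d : ℝ) / α * θ) :=
      (Real.rpow_mul hs.le _ _).symm
    have hθm : θ * ((d : ℝ) + α) = 2 * α - 1 := by rw [hθ]; exact div_mul_cancel₀ _ hq.ne'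
    have e3 : ((d : ℝ) + α) * (1 - θ) = (d : ℝ) + 1 - α := by
      field_simp [hθ]; linear_combination (-1 : ℝ) * hθm
    have e2 : (s / r ^ ((d : ℝ) + α)) ^ (1 - θ) = s ^ (1 - θ) / r ^ ((d : ℝ) + 1 - α) := by
      rw [Real.div_rpow hs.le (Real.rpow_nonneg hr0.le _), ← Real.rpow_mul hr0.le, e3]
    have e4 : -(d : ℝ) / α * θ + (1 - θ) = 1 / α - 1 := by
      field_simp [hθ]; linear_combination (-1 : ℝ) * hθm
    calc min (s ^ (-(d : ℝ) / α)) (s / r ^ ((d : ℝ) + α)) * F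
        ≤ (s ^ (-(d : ℝ) / α * θ) * (s ^ (1 - θ) / r ^ ((d : ℝ) + 1 - α))) * F := by
          rw [e1, e2] at key
          exact mul_le_mul_of_nonneg_right key hF
    _ = s ^ (1 / α - 1) * (F / r ^ ((d : ℝ) + 1 - α)) := by
          have e5 : s ^ (-(d : ℝ) / α * θ) * s ^ (1 - θ) = s ^ (1 / α - 1) := by
            rw [← Real.rpow_add hs, e4]
          rw [← e5]; ring

lemma far_bound {d : ℕ} {α s ρ r u D F : ℝ} (hd : 2 ≤ d) (hα1 : 1 < α) (hα2 : α < 2)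
    (hs : 0 < s) (hρ0 : 0 < ρ) (hρr : ρ ≤ r) (hD : D ≤ r + ρ) (hD0 : 0 ≤ D)
    (hu0 : 0 < u) (huρ : u ≤ ρ) (hF : 0 ≤ F) :
    s / r ^ ((d : ℝ) + α) * F
      ≤ s * 3 ^ ((d : ℝ) + α) * (ρ + D) ^ (-((d : ℝ) + α)) * ρ ^ ((d : ℝ) + 1 - α)
        * (F / u ^ ((d : ℝ) + 1 - α)) := by
  have hd2 : (2 : ℝ) ≤ d := by exact_mod_cast hd
  have hq : 0 < (d : ℝ) + α := by linarith
  have hp : 0 < (d : ℝ) + 1 - α := by linarith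
  have hr0 : 0 < r := lt_of_lt_of_le hρ0 hρr
  have h3 : (ρ + D) / 3 ≤ r := by linarith
  have hpd : 0 < ρ + D := by linarith
  have h1 : s / r ^ ((d : ℝ) + α) ≤ s * 3 ^ ((d : ℝ) + α) * (ρ + D) ^ (-((d : ℝ) + α)) := by
    calc s / r ^ ((d : ℝ) + α) ≤ s / (((ρ + D) / 3) ^ ((d : ℝ) + α)) := by
          apply div_le_div_of_nonneg_left hs.le (Real.rpow_pos_of_pos (by positivity) _)
          exact Real.rpow_le_rpow (by positivity) h3 hq.le
    _ = s * 3 ^ ((d : ℝ) + α) * (ρ + D) ^ (-((d : ℝ) + α)) := by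
          rw [Real.div_rpow hpd.le (by norm_num : (0:ℝ) ≤ 3), Real.rpow_neg hpd.le]
          field_simp
  have h2 : F ≤ ρ ^ ((d : ℝ) + 1 - α) * (F / u ^ ((d : ℝ) + 1 - α)) := by
    have hone : (1 : ℝ) ≤ ρ ^ ((d : ℝ) + 1 - α) / u ^ ((d : ℝ) + 1 - α) :=
      (one_le_div (Real.rpow_pos_of_pos hu0 _)).mpr
        (Real.rpow_le_rpow hu0.le huρ hp.le)
    calc F = F * 1 := (mul_one F).symm
    _ ≤ F * (ρ ^ ((d : ℝ) + 1 - α) / u ^ ((d : ℝ) + 1 - α)) :=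
        mul_le_mul_of_nonneg_left hone hF
    _ = ρ ^ ((d : ℝ) + 1 - α) * (F / u ^ ((d : ℝ) + 1 - α)) := by ring
  calc s / r ^ ((d : ℝ) + α) * F
      ≤ (s * 3 ^ ((d : ℝ) + α) * (ρ + D) ^ (-((d : ℝ) + α)))
        * (ρ ^ ((d : ℝ) + 1 - α) * (F / u ^ ((d : ℝ) + 1 - α))) :=
        mul_le_mul h1 h2 hF (by positivity)
  _ = _ := by ring

theorem kato_time_integral_tendsto_zero
    (d : ℕ) (hd : 2 ≤ d) (α : ℝ) (hα : α ∈ Set.Ioo (1 : ℝ) 2)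
    (f : EuclideanSpace ℝ (Fin d) → ℝ) (hf : Measurable f) (hfK : KatoClass d α f) :
    Filter.Tendsto
      (fun t : ℝ => ⨆ x : EuclideanSpace ℝ (Fin d),
        ∫⁻ s in Set.Ioc (0 : ℝ) t, ∫⁻ y,
          ENNReal.ofReal
            (min (s ^ (-(d : ℝ) / α)) (s / dist x y ^ ((d : ℝ) + α)) * |f y|)
          ∂volume ∂volume)
      (nhdsWithin 0 (Set.Ioi 0)) (nhds 0) := by
  obtain ⟨hα1, hα2⟩ := hα
  have hd2 : (2 : ℝ) ≤ (d : ℝ) := by exact_mod_cast hd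
  have hα0 : 0 < α := by linarith
  have hq : 0 < (d : ℝ) + α := by linarith
  have hp : 0 < (d : ℝ) + 1 - α := by linarith
  have hint : IntegrableOn (fun s : ℝ => s ^ (1 / α - 1)) (Ioc (0:ℝ) 1) := by
    rw [← intervalIntegrable_iff_integrableOn_Ioc_of_le zero_le_one]
    apply intervalIntegral.intervalIntegrable_rpow'
    have h1α : 0 < 1 / α := by positivity
    linarith
  set Cβ : ℝ≥0∞ := ∫⁻ s in Ioc (0:ℝ) 1, ENNReal.ofReal (s ^ (1 / α - 1)) with hCβdef
  have hCβ_top : Cβ ≠ ∞ := hint.setLIntegral_lt_top.ne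
  set J : ℝ≥0∞ := ∫⁻ w : EuclideanSpace ℝ (Fin d),
      ENNReal.ofReal ((1 + ‖w‖) ^ (-((d : ℝ) + α))) with hJdef
  have hJ_top : J ≠ ∞ := by
    refine (finite_integral_one_add_norm ?_).ne
    rw [finrank_euclideanSpace_fin]; linarith
  rw [ENNReal.tendsto_nhds_zero]
  intro ε hε
  set δ : ℝ≥0∞ := min (ε / 2 / Cβ) 1 with hδdef
  have hδ0 : 0 < δ := lt_min (ENNReal.div_pos (ENNReal.half_pos hε.ne').ne' hCβ_top) zero_lt_one
  have hIooEv : ∀ᶠ r in 𝓝[>] (0:ℝ), r ∈ Ioo (0:ℝ) 1 :=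
    Ioo_mem_nhdsGT_of_mem ⟨le_refl (0:ℝ), one_pos⟩
  obtain ⟨ρ, hMρδ, hρ0, hρ1⟩ :
      ∃ ρ : ℝ, katoM d α f ρ ≤ δ ∧ 0 < ρ ∧ ρ < 1 := by
    obtain ⟨ρ, h1, h2⟩ := ((ENNReal.tendsto_nhds_zero.1 hfK δ hδ0).and hIooEv).exists
    exact ⟨ρ, h1, h2.1, h2.2⟩
  set Mρ : ℝ≥0∞ := katoM d α f ρ with hMρdef
  have hMρ_top : Mρ ≠ ∞ :=
    (lt_of_le_of_lt hMρδ (lt_of_le_of_lt (min_le_right _ _) one_lt_top)).ne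
  set v : ℝ≥0∞ := volume (ball (0 : EuclideanSpace ℝ (Fin d)) ρ) with hvdef
  have hv0 : v ≠ 0 := (measure_ball_pos volume 0 hρ0).ne'
  have hv_top : v ≠ ∞ := measure_ball_lt_top.ne
  set c₀ : ℝ := 3 ^ ((d : ℝ) + α) * ρ ^ ((d : ℝ) + 1 - α) * ρ ^ (-((d : ℝ) + α)) with hc₀def
  have hc₀ : 0 ≤ c₀ := by positivity
  set N : ℝ≥0∞ := ENNReal.ofReal c₀ * J with hNdef
  have hN_top : N ≠ ∞ := ENNReal.mul_ne_top ENNReal.ofReal_ne_top hJ_top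
  set C₂ : ℝ≥0∞ := N / v with hC₂def
  set K : ℝ≥0∞ := C₂ * Mρ with hKdef
  have hK_top : K ≠ ∞ := ENNReal.mul_ne_top (ENNReal.div_lt_top hN_top hv0).ne hMρ_top
  have hofReal0 : Tendsto (fun t : ℝ => ENNReal.ofReal t) (𝓝[>] (0:ℝ)) (𝓝 0) := by
    have h := (ENNReal.continuous_ofReal.tendsto (0:ℝ)).mono_left
      (nhdsWithin_le_nhds (s := Ioi (0:ℝ)))
    simpa using h
  have hquad : Tendsto (fun t : ℝ => ENNReal.ofReal t * ENNReal.ofReal t * K)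
      (𝓝[>] (0:ℝ)) (𝓝 0) := by
    have h1 := ENNReal.Tendsto.mul hofReal0 (Or.inr ENNReal.zero_ne_top) hofReal0
      (Or.inr ENNReal.zero_ne_top)
    rw [mul_zero] at h1
    have h2 := ENNReal.Tendsto.mul_const h1 (Or.inr hK_top)
    rwa [zero_mul] at h2
  have hquadEv : ∀ᶠ t in 𝓝[>] (0:ℝ), ENNReal.ofReal t * ENNReal.ofReal t * K ≤ ε / 2 :=
    ENNReal.tendsto_nhds_zero.1 hquad (ε / 2) (ENNReal.half_pos hε.ne')
  filter_upwards [hquadEv, hIooEv] with t hqt htm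
  obtain ⟨ht0, ht1⟩ := htm
  have key : ∀ x : EuclideanSpace ℝ (Fin d),
      (∫⁻ s in Ioc (0:ℝ) t, ∫⁻ y, ENNReal.ofReal
          (min (s ^ (-(d : ℝ) / α)) (s / dist x y ^ ((d : ℝ) + α)) * |f y|) ∂volume ∂volume)
        ≤ Cβ * Mρ + ENNReal.ofReal t * ENNReal.ofReal t * K := by
    intro x
    have step : ∀ s ∈ Ioc (0:ℝ) t,
        (∫⁻ y, ENNReal.ofReal
            (min (s ^ (-(d : ℝ) / α)) (s / dist x y ^ ((d : ℝ) + α)) * |f y|) ∂volume)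
          ≤ ENNReal.ofReal (s ^ (1 / α - 1)) * Mρ + ENNReal.ofReal s * K := by
      rintro s ⟨hs0, hst⟩
      set g : EuclideanSpace ℝ (Fin d) → ℝ≥0∞ := fun y =>
        ENNReal.ofReal (min (s ^ (-(d : ℝ) / α)) (s / dist x y ^ ((d : ℝ) + α)) * |f y|)
        with hgdef
      have hg : Measurable g := by
        apply Measurable.ennreal_ofReal
        exact (measurable_const.min (measurable_const.div
          ((measurable_const.dist measurable_id).pow measurable_const))).mul hf.abs
      have hnear : (∫⁻ y in ball x ρ, g y) ≤ ENNReal.ofReal (s ^ (1 / α - 1)) * Mρ := by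
        calc (∫⁻ y in ball x ρ, g y)
            ≤ ∫⁻ y in ball x ρ, ENNReal.ofReal (s ^ (1 / α - 1)) *
                ENNReal.ofReal (|f y| / dist x y ^ ((d : ℝ) + 1 - α)) ∂volume := by
              refine lintegral_mono fun y => ?_
              rw [hgdef]
              rw [← ENNReal.ofReal_mul (Real.rpow_nonneg hs0.le _)]
              exact ENNReal.ofReal_le_ofReal
                (near_bound hd hα1 hα2 hs0 dist_nonneg (abs_nonneg _))
        _ = ENNReal.ofReal (s ^ (1 / α - 1)) *
              ∫⁻ y in ball x ρ, ENNReal.ofReal (|f y| / dist x y ^ ((d : ℝ) + 1 - α)) ∂volume :=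
              lintegral_const_mul' _ _ ENNReal.ofReal_ne_top
        _ ≤ ENNReal.ofReal (s ^ (1 / α - 1)) * Mρ := by
              apply mul_le_mul_right
              exact le_iSup (fun c : EuclideanSpace ℝ (Fin d) =>
                ∫⁻ y in ball c ρ, ENNReal.ofReal (|f y| / dist c y ^ ((d : ℝ) + 1 - α)) ∂volume) x
      have hfar : (∫⁻ y in (ball x ρ)ᶜ, g y) ≤ ENNReal.ofReal s * K := by
        set S : Set (EuclideanSpace ℝ (Fin d)) := (ball x ρ)ᶜ with hSdef
        set scal : EuclideanSpace ℝ (Fin d) → ℝ := fun z =>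
          s * 3 ^ ((d : ℝ) + α) * (ρ + dist x z) ^ (-((d : ℝ) + α)) * ρ ^ ((d : ℝ) + 1 - α)
          with hscaldef
        have hscal_nn : ∀ z, 0 ≤ scal z := fun z => by
          have h0 : (0:ℝ) ≤ dist x z := dist_nonneg
          have h1 : (0:ℝ) < ρ + dist x z := by linarith
          positivity
        set F2 : EuclideanSpace ℝ (Fin d) → EuclideanSpace ℝ (Fin d) → ℝ≥0∞ := fun z y =>
          (if dist z y < ρ then (1:ℝ≥0∞) else 0) * g y with hF2def
        have hF2m : Measurable (Function.uncurry F2) := by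
          apply Measurable.mul
          · exact Measurable.ite (measurableSet_lt measurable_dist measurable_const)
              measurable_const measurable_const
          · exact hg.comp measurable_snd
        have hswap : (∫⁻ y in S, g y) * v = ∫⁻ z, ∫⁻ y in S, F2 z y ∂volume ∂volume := by
          rw [lintegral_lintegral_swap hF2m.aemeasurable]
          have hx1 : ∀ y : EuclideanSpace ℝ (Fin d), (∫⁻ z, F2 z y ∂volume) = v * g y := by
            intro y
            have heq : (fun z => F2 z y)
                = fun z => (ball y ρ).indicator (1 : EuclideanSpace ℝ (Fin d) → ℝ≥0∞) z * g y := by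
              funext z
              simp only [hF2def]
              by_cases h : z ∈ ball y ρ
              · rw [Set.indicator_of_mem h, if_pos (mem_ball.1 h)]
                rfl
              · rw [Set.indicator_of_notMem h, if_neg (fun hh => h (mem_ball.2 hh))]
            rw [heq, lintegral_mul_const _ (measurable_one.indicator measurableSet_ball),
              lintegral_indicator_one measurableSet_ball,
              Measure.addHaar_ball_center volume y ρ]
          rw [lintegral_congr hx1, lintegral_const_mul' v g hv_top, mul_comm]
        have hinner : ∀ z, (∫⁻ y in S, F2 z y ∂volume) ≤ ENNReal.ofReal (scal z) * Mρ := by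
          intro z
          haveI : Nontrivial (EuclideanSpace ℝ (Fin d)) := by
            haveI : Nonempty (Fin d) := ⟨⟨0, by omega⟩⟩
            infer_instance
          have hz1 : ∀ᵐ (y : EuclideanSpace ℝ (Fin d)) ∂volume, y ≠ z := by
            rw [ae_iff]
            simp only [ne_eq, not_not, setOf_eq_eq_singleton]
            exact measure_singleton z
          have hae : ∀ᵐ y ∂(volume.restrict S), F2 z y ≤
              (ball z ρ).indicator (fun y => ENNReal.ofReal (scal z) *
                ENNReal.ofReal (|f y| / dist z y ^ ((d : ℝ) + 1 - α))) y := by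
            filter_upwards [ae_restrict_of_ae hz1, ae_restrict_mem measurableSet_ball.compl]
              with y hyz hyS
            by_cases hyb : y ∈ ball z ρ
            · have hdzy : dist z y < ρ := by rw [dist_comm]; exact mem_ball.1 hyb
              simp only [hF2def, if_pos hdzy, one_mul, Set.indicator_of_mem hyb]
              rw [hgdef, ← ENNReal.ofReal_mul (hscal_nn z)]
              apply ENNReal.ofReal_le_ofReal
              have hxy : ρ ≤ dist x y := by
                have h' : y ∉ ball x ρ := hyS
                rw [mem_ball, not_lt] at h'
                rw [dist_comm]; exact h'
              have hDz : dist x z ≤ dist x y + ρ := by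
                have h1 := dist_triangle x y z
                have h2 : dist y z < ρ := mem_ball.1 hyb
                linarith
              have huz : 0 < dist z y := dist_pos.2 (Ne.symm hyz)
              calc min (s ^ (-(d : ℝ) / α)) (s / dist x y ^ ((d : ℝ) + α)) * |f y|
                  ≤ (s / dist x y ^ ((d : ℝ) + α)) * |f y| :=
                    mul_le_mul_of_nonneg_right (min_le_right _ _) (abs_nonneg _)
              _ ≤ scal z * (|f y| / dist z y ^ ((d : ℝ) + 1 - α)) :=
                    far_bound hd hα1 hα2 hs0 hρ0 hxy hDz dist_nonneg huz hdzy.le (abs_nonneg _)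
            · have hnlt : ¬ dist z y < ρ := by
                rw [dist_comm]; exact fun h => hyb (mem_ball.2 h)
              simp only [hF2def, if_neg hnlt, zero_mul]
              exact zero_le
          calc (∫⁻ y in S, F2 z y ∂volume)
              ≤ ∫⁻ y in S, (ball z ρ).indicator (fun y => ENNReal.ofReal (scal z) *
                  ENNReal.ofReal (|f y| / dist z y ^ ((d : ℝ) + 1 - α))) y ∂volume :=
                lintegral_mono_ae hae
          _ ≤ ∫⁻ y, (ball z ρ).indicator (fun y => ENNReal.ofReal (scal z) *
                  ENNReal.ofReal (|f y| / dist z y ^ ((d : ℝ) + 1 - α))) y ∂volume :=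
                setLIntegral_le_lintegral _ _
          _ = ∫⁻ y in ball z ρ, ENNReal.ofReal (scal z) *
                  ENNReal.ofReal (|f y| / dist z y ^ ((d : ℝ) + 1 - α)) ∂volume :=
                lintegral_indicator measurableSet_ball _
          _ = ENNReal.ofReal (scal z) *
                ∫⁻ y in ball z ρ, ENNReal.ofReal (|f y| / dist z y ^ ((d : ℝ) + 1 - α)) ∂volume :=
                lintegral_const_mul' _ _ ENNReal.ofReal_ne_top
          _ ≤ ENNReal.ofReal (scal z) * Mρ :=
                mul_le_mul_right (le_iSup (fun c : EuclideanSpace ℝ (Fin d) =>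
                  ∫⁻ y in ball c ρ, ENNReal.ofReal (|f y| / dist c y ^ ((d : ℝ) + 1 - α)) ∂volume)
                  z) _
        have hscalm : Measurable fun z : EuclideanSpace ℝ (Fin d) => ENNReal.ofReal (scal z) := by
          apply Measurable.ennreal_ofReal
          exact ((measurable_const.mul ((measurable_const.add
            (measurable_const.dist measurable_id)).pow measurable_const)).mul measurable_const)
        have hpt : ∀ z : EuclideanSpace ℝ (Fin d),
            scal z ≤ (s * c₀) * (1 + dist x z) ^ (-((d : ℝ) + α)) := by
          intro z
          have hd0 : (0:ℝ) ≤ dist x z := dist_nonneg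
          have hbase : ρ * (1 + dist x z) ≤ ρ + dist x z := by nlinarith [hρ1.le]
          have h1 : (ρ + dist x z) ^ (-((d : ℝ) + α))
              ≤ (ρ * (1 + dist x z)) ^ (-((d : ℝ) + α)) := by
            rw [Real.rpow_neg (by positivity), Real.rpow_neg (by positivity)]
            apply inv_anti₀ (Real.rpow_pos_of_pos (by positivity) _)
            exact Real.rpow_le_rpow (by positivity) hbase hq.le
          have h2 : (ρ * (1 + dist x z)) ^ (-((d : ℝ) + α))
              = ρ ^ (-((d : ℝ) + α)) * (1 + dist x z) ^ (-((d : ℝ) + α)) :=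
            Real.mul_rpow hρ0.le (by positivity)
          calc scal z ≤ s * 3 ^ ((d : ℝ) + α) *
                (ρ ^ (-((d : ℝ) + α)) * (1 + dist x z) ^ (-((d : ℝ) + α)))
                * ρ ^ ((d : ℝ) + 1 - α) := by
                rw [hscaldef]
                dsimp only
                rw [← h2]
                exact mul_le_mul_of_nonneg_right
                  (mul_le_mul_of_nonneg_left h1 (by positivity)) (by positivity)
          _ = (s * c₀) * (1 + dist x z) ^ (-((d : ℝ) + α)) := by rw [hc₀def]; ring
        have hscal_int : (∫⁻ z, ENNReal.ofReal (scal z) ∂volume) ≤ ENNReal.ofReal s * N := by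
          calc (∫⁻ z, ENNReal.ofReal (scal z) ∂volume)
              ≤ ∫⁻ z, ENNReal.ofReal ((s * c₀) * (1 + dist x z) ^ (-((d : ℝ) + α))) ∂volume :=
                lintegral_mono fun z => ENNReal.ofReal_le_ofReal (hpt z)
          _ = ENNReal.ofReal (s * c₀) *
                ∫⁻ z, ENNReal.ofReal ((1 + dist x z) ^ (-((d : ℝ) + α))) ∂volume := by
                simp_rw [ENNReal.ofReal_mul (by positivity : (0:ℝ) ≤ s * c₀)]
                exact lintegral_const_mul' _ _ ENNReal.ofReal_ne_top
          _ = ENNReal.ofReal (s * c₀) * J := by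
                congr 1
                have hdist : ∀ z : EuclideanSpace ℝ (Fin d), dist x z = ‖z - x‖ := fun z => by
                  rw [dist_comm, dist_eq_norm]
                simp_rw [hdist]
                exact lintegral_sub_right_eq_self
                  (fun w : EuclideanSpace ℝ (Fin d) =>
                    ENNReal.ofReal ((1 + ‖w‖) ^ (-((d : ℝ) + α)))) x
          _ ≤ ENNReal.ofReal s * N := by
                rw [hNdef, ENNReal.ofReal_mul hs0.le, mul_assoc]
        have hIv : (∫⁻ y in S, g y) * v ≤ (ENNReal.ofReal s * N) * Mρ := by
          rw [hswap]
          calc (∫⁻ z, ∫⁻ y in S, F2 z y ∂volume ∂volume)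
              ≤ ∫⁻ z, ENNReal.ofReal (scal z) * Mρ ∂volume := lintegral_mono hinner
          _ = (∫⁻ z, ENNReal.ofReal (scal z) ∂volume) * Mρ := lintegral_mul_const _ hscalm
          _ ≤ (ENNReal.ofReal s * N) * Mρ := mul_le_mul_left hscal_int _
        have hRHS : (ENNReal.ofReal s * K) * v = (ENNReal.ofReal s * N) * Mρ := by
          rw [hKdef, hC₂def]
          calc (ENNReal.ofReal s * (N / v * Mρ)) * v
              = (ENNReal.ofReal s * Mρ) * (N / v * v) := by ring
          _ = (ENNReal.ofReal s * N) * Mρ := by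
              rw [ENNReal.div_mul_cancel hv0 hv_top]; ring
        have hIv' : (∫⁻ y in S, g y) * v ≤ (ENNReal.ofReal s * K) * v := by
          rw [hRHS]; exact hIv
        exact (ENNReal.mul_le_mul_iff_left hv0 hv_top).1 hIv'
      calc (∫⁻ y, g y ∂volume)
          = (∫⁻ y in ball x ρ, g y) + ∫⁻ y in (ball x ρ)ᶜ, g y :=
            (lintegral_add_compl g measurableSet_ball).symm
      _ ≤ ENNReal.ofReal (s ^ (1 / α - 1)) * Mρ + ENNReal.ofReal s * K :=
            add_le_add hnear hfar
    have hm0 : Measurable fun s : ℝ => ENNReal.ofReal (s ^ (1 / α - 1)) :=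
      (measurable_id.pow measurable_const).ennreal_ofReal
    have hm2 : Measurable fun s : ℝ => ENNReal.ofReal s := measurable_id.ennreal_ofReal
    have hm1 : Measurable fun s : ℝ => ENNReal.ofReal (s ^ (1 / α - 1)) * Mρ :=
      hm0.mul_const _
    calc (∫⁻ s in Ioc (0:ℝ) t, ∫⁻ y, ENNReal.ofReal
            (min (s ^ (-(d : ℝ) / α)) (s / dist x y ^ ((d : ℝ) + α)) * |f y|) ∂volume ∂volume)
        ≤ ∫⁻ s in Ioc (0:ℝ) t,
            (ENNReal.ofReal (s ^ (1 / α - 1)) * Mρ + ENNReal.ofReal s * K) ∂volume :=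
          setLIntegral_mono' measurableSet_Ioc step
    _ = (∫⁻ s in Ioc (0:ℝ) t, ENNReal.ofReal (s ^ (1 / α - 1))) * Mρ
          + (∫⁻ s in Ioc (0:ℝ) t, ENNReal.ofReal s) * K := by
          rw [lintegral_add_left hm1, lintegral_mul_const _ hm0, lintegral_mul_const _ hm2]
    _ ≤ Cβ * Mρ + ENNReal.ofReal t * ENNReal.ofReal t * K := by
          apply add_le_add
          · apply mul_le_mul_left
            exact lintegral_mono_set (Ioc_subset_Ioc_right ht1.le)
          · apply mul_le_mul_left
            calc (∫⁻ s in Ioc (0:ℝ) t, ENNReal.ofReal s)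
                ≤ ∫⁻ _ in Ioc (0:ℝ) t, ENNReal.ofReal t ∂volume :=
                  setLIntegral_mono' measurableSet_Ioc
                    (fun s hs => ENNReal.ofReal_le_ofReal hs.2)
            _ = ENNReal.ofReal t * volume (Ioc (0:ℝ) t) := setLIntegral_const _ _
            _ = ENNReal.ofReal t * ENNReal.ofReal t := by rw [Real.volume_Ioc, sub_zero]
  refine le_trans (iSup_le key) ?_
  have hterm1 : Cβ * Mρ ≤ ε / 2 :=
    calc Cβ * Mρ ≤ Cβ * (ε / 2 / Cβ) := mul_le_mul_right (hMρδ.trans (min_le_left _ _)) _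
    _ ≤ ε / 2 := ENNReal.mul_div_le
  calc Cβ * Mρ + ENNReal.ofReal t * ENNReal.ofReal t * K
      ≤ ε / 2 + ε / 2 := add_le_add hterm1 hqt
  _ = ε := ENNReal.add_halves ε
end

section
/- Let d ≥ 2 be an integer and α ∈ (1, 2). There exists a constant C > 0, depending only on d and α, such that for every nonempty bounded open set D ⊂ ℝ^d and all pairwise distinct x, y, z ∈ D, g_D(x,z) · g_D(z,y) / ( min( |z-y|, δ_D(z) ) ) ≤ C · g_D(x,y) · ( |x-z|^{-(d+1-α)} + |z-y|^{-(d+1-α)} ), where g_D(u,v) = |u-v|^{-(d-α)} · ( min( 1, δ_D(u) δ_D(v) / |u-v|² ) )^{α/2}. -/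
open MeasureTheory Metric Set Filter

/-- `g_D(x,y) = |x-y|^{-(d-α)} (min(1, δ_D(x)δ_D(y)/|x-y|²))^{α/2}`, comparable to the
Green function of the killed symmetric `α`-stable process in a bounded `C^{1,1}` open set. -/
noncomputable def greenG (d : ℕ) (α : ℝ) (D : Set (EuclideanSpace ℝ (Fin d)))
    (x y : EuclideanSpace ℝ (Fin d)) : ℝ :=
  (min 1 (Metric.infDist x Dᶜ * Metric.infDist y Dᶜ / dist x y ^ 2)) ^ (α / 2)
    / dist x y ^ ((d : ℝ) - α)

section ThreeGHelpers

open Real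

private lemma min_mul_le' {p q : ℝ} (hp : 0 ≤ p) (hq : 0 ≤ q) :
    min 1 p * min 1 q ≤ min 1 (p * q) := by
  apply le_min
  · calc min 1 p * min 1 q ≤ 1 * 1 :=
        mul_le_mul (min_le_left _ _) (min_le_left _ _) (le_min zero_le_one hq) zero_le_one
      _ = 1 := mul_one 1
  · exact mul_le_mul (min_le_right _ _) (min_le_right _ _) (le_min zero_le_one hq) hp

private lemma le_min_mul' {p q : ℝ} (hp : 0 ≤ p) (hq : 0 ≤ q)
    (h1 : p ≤ q + 1) (h2 : q ≤ p + 1) : min 1 (p * q) ≤ 2 * (min 1 p * min 1 q) := by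
  rcases le_total p 1 with hp1 | hp1 <;> rcases le_total q 1 with hq1 | hq1
  · rw [min_eq_right hp1, min_eq_right hq1]
    nlinarith [min_le_right 1 (p*q)]
  · rw [min_eq_right hp1, min_eq_left hq1]
    nlinarith [min_le_right 1 (p*q)]
  · rw [min_eq_left hp1, min_eq_right hq1]
    nlinarith [min_le_right 1 (p*q)]
  · rw [min_eq_left hp1, min_eq_left hq1]
    nlinarith [min_le_left 1 (p*q)]

private lemma min_scale' {u s t : ℝ} (hu : 0 ≤ u) (hs : 0 < s) (hst : s ≤ t) :
    min 1 (u / s) ≤ (t / s) * min 1 (u / t) := by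
  have ht : 0 < t := hs.trans_le hst
  rcases le_total u t with h | h
  · have e : min 1 (u/t) = u/t := min_eq_right ((div_le_one ht).2 h)
    rw [e]
    calc min 1 (u/s) ≤ u / s := min_le_right _ _
      _ = (t/s) * (u/t) := by field_simp
  · have e : min 1 (u/t) = 1 := min_eq_left (by rw [le_div_iff₀ ht]; linarith)
    rw [e, mul_one]
    calc min 1 (u/s) ≤ 1 := min_le_left _ _
      _ ≤ (t/s) := (one_le_div hs).2 hst

private lemma min_double' {u r s : ℝ} (hu : 0 ≤ u) (hr : 0 < r) (hs : 0 < s) (h : r ≤ 2*s) :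
    min 1 (u/s) ≤ 2 * min 1 (u/r) := by
  rcases le_total u r with h1 | h1
  · have e : min 1 (u/r) = u/r := min_eq_right ((div_le_one hr).2 h1)
    rw [e]
    calc min 1 (u/s) ≤ u/s := min_le_right _ _
      _ ≤ 2 * u / r := by rw [div_le_div_iff₀ hs hr]; nlinarith
      _ = 2 * (u/r) := mul_div_assoc _ _ _
  · have e : min 1 (u/r) = 1 := min_eq_left (by rw [le_div_iff₀ hr]; linarith)
    rw [e, mul_one]
    calc min 1 (u/s) ≤ 1 := min_le_left _ _
      _ ≤ 2 := by norm_num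

private lemma min_add_le' {a b : ℝ} (hb : 0 ≤ b) : min 1 (a + b) ≤ min 1 a + b := by
  rcases le_total a 1 with h | h
  · calc min 1 (a+b) ≤ a + b := min_le_right _ _
      _ ≤ min 1 a + b := by rw [min_eq_right h]
  · calc min 1 (a+b) ≤ 1 := min_le_left _ _
      _ ≤ min 1 a + b := by rw [min_eq_left h]; linarith

private lemma base' {dy s t : ℝ} (hdy : 0 ≤ dy) (hs : 0 < s) (ht : 0 < t) (hts : t ≤ s) :
    (t/s) * min 1 (dy/t) ≤ min 1 (dy/s) := by
  rcases le_total dy t with h | h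
  · have e : min 1 (dy/t) = dy/t := min_eq_right ((div_le_one ht).2 h)
    have e2 : min 1 (dy/s) = dy/s := min_eq_right ((div_le_one hs).2 (h.trans hts))
    rw [e, e2]
    have : (t/s) * (dy/t) = dy/s := by field_simp
    rw [this]
  · have e : min 1 (dy/t) = 1 := min_eq_left ((one_le_div ht).2 h)
    rw [e, mul_one]
    refine le_min ((div_le_one hs).2 hts) ?_
    gcongr

private lemma claim1 {γ s t dy dz : ℝ} (hγ1 : 1/2 < γ) (hγ2 : γ < 1)
    (hs : 0 < s) (ht : 0 < t) (hdy : 0 < dy) (hdz : 0 < dz)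
    (hts : t ≤ s) (hzy : dz ≤ dy + t) :
    (min 1 (dz/s))^γ * (min 1 (dz/t))^γ * (min 1 (dy/t))^γ
      ≤ 2 * (min 1 (dy/s))^γ * (min 1 (dz/t)) := by
  have hγ0 : (0:ℝ) < γ := by linarith
  have hFyt : (0:ℝ) < min 1 (dy/t) := lt_min one_pos (div_pos hdy ht)
  have hFys : (0:ℝ) < min 1 (dy/s) := lt_min one_pos (div_pos hdy hs)
  have hFzs : (0:ℝ) < min 1 (dz/s) := lt_min one_pos (div_pos hdz hs)
  have h2γ : (2:ℝ)^γ ≤ 2 := by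
    have h := Real.rpow_le_rpow_of_exponent_le one_le_two hγ2.le
    rwa [Real.rpow_one] at h
  rcases le_total t dz with h | h
  · have e : min 1 (dz/t) = 1 := min_eq_left ((one_le_div ht).2 h)
    rw [e, Real.one_rpow, mul_one, mul_one]
    have h1 : min 1 (dz/s) ≤ min 1 (dy/s) + t/s := by
      calc min 1 (dz/s) ≤ min 1 ((dy+t)/s) :=
            min_le_min le_rfl (by gcongr)
        _ = min 1 (dy/s + t/s) := by rw [add_div]
        _ ≤ min 1 (dy/s) + t/s := min_add_le' (by positivity)
    have h2 := base' hdy.le hs ht hts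
    have prod : min 1 (dz/s) * min 1 (dy/t) ≤ 2 * min 1 (dy/s) := by
      nlinarith [min_le_left 1 (dy/t), mul_le_mul_of_nonneg_right h1 hFyt.le,
        mul_le_mul_of_nonneg_left (min_le_left 1 (dy/t)) hFys.le]
    calc (min 1 (dz/s))^γ * (min 1 (dy/t))^γ
        = (min 1 (dz/s) * min 1 (dy/t))^γ := (Real.mul_rpow hFzs.le hFyt.le).symm
      _ ≤ (2 * min 1 (dy/s))^γ := Real.rpow_le_rpow (by positivity) prod hγ0.le
      _ = 2^γ * (min 1 (dy/s))^γ := Real.mul_rpow (by norm_num) hFys.le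
      _ ≤ 2 * (min 1 (dy/s))^γ := mul_le_mul_of_nonneg_right h2γ (by positivity)
  · have ezt : min 1 (dz/t) = dz/t := min_eq_right ((div_le_one ht).2 h)
    have ezs : min 1 (dz/s) = dz/s := min_eq_right ((div_le_one hs).2 (h.trans hts))
    rw [ezt, ezs]
    have hzt : (0:ℝ) < dz/t := div_pos hdz ht
    have key : (dz/s)^γ * (dz/t)^γ ≤ (t/s)^γ * (dz/t) := by
      have e1 : (dz/s)*(dz/t) = (t/s)*((dz/t)*(dz/t)) := by field_simp
      calc (dz/s)^γ*(dz/t)^γ = ((dz/s)*(dz/t))^γ := (Real.mul_rpow (by positivity) (by positivity)).symm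
        _ = ((t/s)*((dz/t)*(dz/t)))^γ := by rw [e1]
        _ = (t/s)^γ * ((dz/t)*(dz/t))^γ := Real.mul_rpow (by positivity) (by positivity)
        _ ≤ (t/s)^γ * (dz/t) := by
            apply mul_le_mul_of_nonneg_left _ (by positivity)
            calc ((dz/t)*(dz/t))^γ = (dz/t)^γ * (dz/t)^γ := Real.mul_rpow hzt.le hzt.le
              _ = (dz/t)^(γ+γ) := (Real.rpow_add hzt γ γ).symm
              _ ≤ (dz/t)^(1:ℝ) := Real.rpow_le_rpow_of_exponent_ge hzt ((div_le_one ht).2 h) (by linarith)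
              _ = dz/t := Real.rpow_one _
    have key2 : (t/s)^γ * (min 1 (dy/t))^γ ≤ (min 1 (dy/s))^γ := by
      rw [← Real.mul_rpow (by positivity) hFyt.le]
      exact Real.rpow_le_rpow (by positivity) (base' hdy.le hs ht hts) hγ0.le
    nlinarith [mul_le_mul_of_nonneg_right key (Real.rpow_nonneg hFyt.le γ),
      mul_le_mul_of_nonneg_right key2 hzt.le,
      mul_pos (Real.rpow_pos_of_pos hFys γ) hzt]

private lemma claim2 {γ s t dx dz : ℝ} (hγ1 : 1/2 < γ) (hγ2 : γ < 1)
    (hs : 0 < s) (ht : 0 < t) (hdx : 0 < dx) (hdz : 0 < dz) (hst : s ≤ t) :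
    (min 1 (dx/s))^γ * (min 1 (dz/s))^γ * (min 1 (dz/t))^γ
      ≤ (t/s) * (min 1 (dx/t))^γ * (min 1 (dz/t)) := by
  have hγ0 : (0:ℝ) < γ := by linarith
  have hts1 : (1:ℝ) ≤ t/s := (one_le_div hs).2 hst
  have hts0 : (0:ℝ) < t/s := by positivity
  have hFxt : (0:ℝ) < min 1 (dx/t) := lt_min one_pos (div_pos hdx ht)
  have hFzt : (0:ℝ) < min 1 (dz/t) := lt_min one_pos (div_pos hdz ht)
  have part1 : (min 1 (dx/s))^γ ≤ (t/s)^γ * (min 1 (dx/t))^γ := by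
    rw [← Real.mul_rpow hts0.le hFxt.le]
    exact Real.rpow_le_rpow (by positivity) (min_scale' hdx.le hs hst) hγ0.le
  have part2 : (min 1 (dz/s))^γ * (min 1 (dz/t))^γ ≤ (t/s)^(1-γ) * (min 1 (dz/t)) := by
    rcases le_total t dz with h | h
    · have e : min 1 (dz/t) = 1 := min_eq_left ((one_le_div ht).2 h)
      rw [e, Real.one_rpow, mul_one, mul_one]
      calc (min 1 (dz/s))^γ ≤ 1^γ :=
            Real.rpow_le_rpow (by positivity) (min_le_left _ _) hγ0.le
        _ = 1 := Real.one_rpow γ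
        _ = 1^(1-γ) := (Real.one_rpow _).symm
        _ ≤ (t/s)^(1-γ) := Real.rpow_le_rpow zero_le_one hts1 (by linarith)
    · have ezt : min 1 (dz/t) = dz/t := min_eq_right ((div_le_one ht).2 h)
      have hzt : (0:ℝ) < dz/t := div_pos hdz ht
      rw [ezt]
      rcases le_total dz s with h2 | h2
      · have ezs : min 1 (dz/s) = dz/s := min_eq_right ((div_le_one hs).2 h2)
        rw [ezs]
        have e1 : (dz/s)*(dz/t) = (t/s)*((dz/t)*(dz/t)) := by field_simp
        have estep : (dz/t)^(γ+γ) = (dz/t)^(γ+γ-1) * (dz/t) := by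
          have h3 := Real.rpow_add hzt (γ+γ-1) 1
          rw [Real.rpow_one] at h3
          rw [← h3]
          congr 1; ring
        have hexp : (t/s)^γ * (s/t)^(γ+γ-1) = (t/s)^(1-γ) := by
          rw [show s/t = (t/s)⁻¹ by rw [inv_div], Real.inv_rpow hts0.le,
            ← Real.rpow_neg hts0.le, ← Real.rpow_add hts0]
          congr 1; ring
        have hmono : (dz/t)^(γ+γ-1) ≤ (s/t)^(γ+γ-1) :=
          Real.rpow_le_rpow hzt.le (by gcongr) (by linarith)
        calc (dz/s)^γ * (dz/t)^γ
            = ((dz/s)*(dz/t))^γ := (Real.mul_rpow (by positivity) (by positivity)).symm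
          _ = ((t/s)*((dz/t)*(dz/t)))^γ := by rw [e1]
          _ = (t/s)^γ * ((dz/t)*(dz/t))^γ := Real.mul_rpow (by positivity) (by positivity)
          _ = (t/s)^γ * ((dz/t)^(γ+γ-1) * (dz/t)) := by
              rw [Real.mul_rpow hzt.le hzt.le, ← Real.rpow_add hzt, estep]
          _ ≤ (t/s)^γ * ((s/t)^(γ+γ-1) * (dz/t)) := by
              apply mul_le_mul_of_nonneg_left _ (by positivity)
              exact mul_le_mul_of_nonneg_right hmono hzt.le
          _ = ((t/s)^γ * (s/t)^(γ+γ-1)) * (dz/t) := by ring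
          _ = (t/s)^(1-γ) * (dz/t) := by rw [hexp]
      · have ezs : min 1 (dz/s) = 1 := min_eq_left ((one_le_div hs).2 h2)
        rw [ezs, Real.one_rpow, one_mul]
        have h1 : (dz/t)^γ = (dz/t)^(γ-1) * (dz/t) := by
          have h3 := Real.rpow_add hzt (γ-1) 1
          rw [Real.rpow_one] at h3
          rw [← h3]
          congr 1; ring
        have h4 : (dz/t)^(γ-1) = (t/dz)^(1-γ) := by
          rw [show t/dz = (dz/t)⁻¹ by rw [inv_div], Real.inv_rpow hzt.le,
            ← Real.rpow_neg hzt.le]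
          congr 1; ring
        have h5 : (t/dz)^(1-γ) ≤ (t/s)^(1-γ) :=
          Real.rpow_le_rpow (by positivity) (by gcongr) (by linarith)
        calc (dz/t)^γ = (dz/t)^(γ-1) * (dz/t) := h1
          _ = (t/dz)^(1-γ) * (dz/t) := by rw [h4]
          _ ≤ (t/s)^(1-γ) * (dz/t) := mul_le_mul_of_nonneg_right h5 hzt.le
  calc (min 1 (dx/s))^γ * (min 1 (dz/s))^γ * (min 1 (dz/t))^γ
      = (min 1 (dx/s))^γ * ((min 1 (dz/s))^γ * (min 1 (dz/t))^γ) := by ring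
    _ ≤ ((t/s)^γ * (min 1 (dx/t))^γ) * ((t/s)^(1-γ) * (min 1 (dz/t))) := by
        apply mul_le_mul part1 part2 (by positivity) (by positivity)
    _ = ((t/s)^γ * (t/s)^(1-γ)) * (min 1 (dx/t))^γ * (min 1 (dz/t)) := by ring
    _ = (t/s) * (min 1 (dx/t))^γ * (min 1 (dz/t)) := by
        rw [← Real.rpow_add hts0]
        norm_num

private lemma key3G {γ N s t r dx dy dz : ℝ}
    (hγ1 : 1/2 < γ) (hγ2 : γ < 1) (hN : 0 < N)
    (hs : 0 < s) (ht : 0 < t) (hr : 0 < r)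
    (hdx : 0 < dx) (hdy : 0 < dy) (hdz : 0 < dz)
    (hxz : dx ≤ dz + s) (hzx : dz ≤ dx + s)
    (hzy : dz ≤ dy + t) (hyz : dy ≤ dz + t)
    (hrst : r ≤ s + t) :
    (min 1 (dx*dz/s^2))^γ * (min 1 (dz*dy/t^2))^γ / (s^N * t^N * min t dz)
      ≤ 2^N * 32 * ((min 1 (dx*dy/r^2))^γ / r^N) * (s^(-(N+1)) + t^(-(N+1))) := by
  have hγ0 : (0:ℝ) < γ := by linarith
  have hFxs : (0:ℝ) < min 1 (dx/s) := lt_min one_pos (div_pos hdx hs)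
  have hFzs : (0:ℝ) < min 1 (dz/s) := lt_min one_pos (div_pos hdz hs)
  have hFzt : (0:ℝ) < min 1 (dz/t) := lt_min one_pos (div_pos hdz ht)
  have hFyt : (0:ℝ) < min 1 (dy/t) := lt_min one_pos (div_pos hdy ht)
  have hFxr : (0:ℝ) < min 1 (dx/r) := lt_min one_pos (div_pos hdx hr)
  have hFyr : (0:ℝ) < min 1 (dy/r) := lt_min one_pos (div_pos hdy hr)
  have hFxt : (0:ℝ) < min 1 (dx/t) := lt_min one_pos (div_pos hdx ht)
  have hFys : (0:ℝ) < min 1 (dy/s) := lt_min one_pos (div_pos hdy hs)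
  have hA0 : (0:ℝ) < min 1 (dx*dz/s^2) := lt_min one_pos (by positivity)
  have hB0 : (0:ℝ) < min 1 (dz*dy/t^2) := lt_min one_pos (by positivity)
  have hm0 : (0:ℝ) < min 1 (dx*dy/r^2) := lt_min one_pos (by positivity)
  have h2γ : (2:ℝ)^γ ≤ 2 := by
    have h := Real.rpow_le_rpow_of_exponent_le one_le_two hγ2.le
    rwa [Real.rpow_one] at h
  -- numerator factorizations
  have eA : dx*dz/s^2 = (dx/s)*(dz/s) := by field_simp
  have eB : dz*dy/t^2 = (dz/t)*(dy/t) := by field_simp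
  have em : dx*dy/r^2 = (dx/r)*(dy/r) := by field_simp
  have hb1 : dx/s ≤ dz/s + 1 := by
    have h1 : dx/s ≤ (dz+s)/s := by gcongr
    rwa [add_div, div_self hs.ne'] at h1
  have hb2 : dz/s ≤ dx/s + 1 := by
    have h1 : dz/s ≤ (dx+s)/s := by gcongr
    rwa [add_div, div_self hs.ne'] at h1
  have hb3 : dz/t ≤ dy/t + 1 := by
    have h1 : dz/t ≤ (dy+t)/t := by gcongr
    rwa [add_div, div_self ht.ne'] at h1
  have hb4 : dy/t ≤ dz/t + 1 := by
    have h1 : dy/t ≤ (dz+t)/t := by gcongr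
    rwa [add_div, div_self ht.ne'] at h1
  have hAγ : (min 1 (dx*dz/s^2))^γ ≤ 2 * ((min 1 (dx/s))^γ * (min 1 (dz/s))^γ) := by
    calc (min 1 (dx*dz/s^2))^γ ≤ (2*(min 1 (dx/s) * min 1 (dz/s)))^γ := by
          apply Real.rpow_le_rpow hA0.le _ hγ0.le
          rw [eA]
          exact le_min_mul' (by positivity) (by positivity) hb1 hb2
      _ = 2^γ * (min 1 (dx/s) * min 1 (dz/s))^γ := Real.mul_rpow (by norm_num) (by positivity)
      _ = 2^γ * ((min 1 (dx/s))^γ * (min 1 (dz/s))^γ) := by rw [Real.mul_rpow hFxs.le hFzs.le]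
      _ ≤ 2 * ((min 1 (dx/s))^γ * (min 1 (dz/s))^γ) :=
          mul_le_mul_of_nonneg_right h2γ (by positivity)
  have hBγ : (min 1 (dz*dy/t^2))^γ ≤ 2 * ((min 1 (dz/t))^γ * (min 1 (dy/t))^γ) := by
    calc (min 1 (dz*dy/t^2))^γ ≤ (2*(min 1 (dz/t) * min 1 (dy/t)))^γ := by
          apply Real.rpow_le_rpow hB0.le _ hγ0.le
          rw [eB]
          exact le_min_mul' (by positivity) (by positivity) hb3 hb4
      _ = 2^γ * (min 1 (dz/t) * min 1 (dy/t))^γ := Real.mul_rpow (by norm_num) (by positivity)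
      _ = 2^γ * ((min 1 (dz/t))^γ * (min 1 (dy/t))^γ) := by rw [Real.mul_rpow hFzt.le hFyt.le]
      _ ≤ 2 * ((min 1 (dz/t))^γ * (min 1 (dy/t))^γ) :=
          mul_le_mul_of_nonneg_right h2γ (by positivity)
  have hmγ : (min 1 (dx/r))^γ * (min 1 (dy/r))^γ ≤ (min 1 (dx*dy/r^2))^γ := by
    rw [← Real.mul_rpow hFxr.le hFyr.le]
    apply Real.rpow_le_rpow (by positivity) _ hγ0.le
    rw [em]
    exact min_mul_le' (by positivity) (by positivity)
  have hmin : min t dz = t * min 1 (dz/t) := by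
    rcases le_total t dz with h | h
    · rw [min_eq_left h, min_eq_left ((one_le_div ht).2 h), mul_one]
    · rw [min_eq_right h, min_eq_right ((div_le_one ht).2 h), mul_div_cancel₀ _ ht.ne']
  have hrpos : (0:ℝ) < r^N := Real.rpow_pos_of_pos hr N
  have hspos : (0:ℝ) < s^N := Real.rpow_pos_of_pos hs N
  have htpos : (0:ℝ) < t^N := Real.rpow_pos_of_pos ht N
  have hmpow : (0:ℝ) < (min 1 (dx*dy/r^2))^γ := Real.rpow_pos_of_pos hm0 γ
  rcases le_total t s with hts | hst
  -- Case t ≤ s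
  · have hr2s : r ≤ 2*s := by linarith
    have hxs2 : (min 1 (dx/s))^γ ≤ 2 * (min 1 (dx/r))^γ := by
      calc (min 1 (dx/s))^γ ≤ (2 * min 1 (dx/r))^γ :=
            Real.rpow_le_rpow hFxs.le (min_double' hdx.le hr hs hr2s) hγ0.le
        _ = 2^γ * (min 1 (dx/r))^γ := Real.mul_rpow (by norm_num) hFxr.le
        _ ≤ 2 * (min 1 (dx/r))^γ := mul_le_mul_of_nonneg_right h2γ (by positivity)
    have hys2 : (min 1 (dy/s))^γ ≤ 2 * (min 1 (dy/r))^γ := by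
      calc (min 1 (dy/s))^γ ≤ (2 * min 1 (dy/r))^γ :=
            Real.rpow_le_rpow hFys.le (min_double' hdy.le hr hs hr2s) hγ0.le
        _ = 2^γ * (min 1 (dy/r))^γ := Real.mul_rpow (by norm_num) hFyr.le
        _ ≤ 2 * (min 1 (dy/r))^γ := mul_le_mul_of_nonneg_right h2γ (by positivity)
    have hc1 := claim1 hγ1 hγ2 hs ht hdy hdz hts hzy
    have hnum : (min 1 (dx*dz/s^2))^γ * (min 1 (dz*dy/t^2))^γ
        ≤ 32 * ((min 1 (dx*dy/r^2))^γ * min 1 (dz/t)) := by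
      have step1 : (min 1 (dx*dz/s^2))^γ * (min 1 (dz*dy/t^2))^γ
          ≤ 4 * ((min 1 (dx/s))^γ * ((min 1 (dz/s))^γ * (min 1 (dz/t))^γ * (min 1 (dy/t))^γ)) := by
        calc (min 1 (dx*dz/s^2))^γ * (min 1 (dz*dy/t^2))^γ
            ≤ (2 * ((min 1 (dx/s))^γ * (min 1 (dz/s))^γ))
              * (2 * ((min 1 (dz/t))^γ * (min 1 (dy/t))^γ)) :=
              mul_le_mul hAγ hBγ (Real.rpow_pos_of_pos hB0 γ).le (by positivity)
          _ = 4 * ((min 1 (dx/s))^γ * ((min 1 (dz/s))^γ * (min 1 (dz/t))^γ * (min 1 (dy/t))^γ)) := by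
              ring
      have step2 : (min 1 (dx/s))^γ * ((min 1 (dz/s))^γ * (min 1 (dz/t))^γ * (min 1 (dy/t))^γ)
          ≤ (2 * (min 1 (dx/r))^γ) * (2 * (2 * (min 1 (dy/r))^γ) * min 1 (dz/t)) := by
        apply mul_le_mul hxs2 _ (by positivity) (by positivity)
        calc (min 1 (dz/s))^γ * (min 1 (dz/t))^γ * (min 1 (dy/t))^γ
            ≤ 2 * (min 1 (dy/s))^γ * (min 1 (dz/t)) := hc1
          _ ≤ 2 * (2 * (min 1 (dy/r))^γ) * (min 1 (dz/t)) := by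
              apply mul_le_mul_of_nonneg_right _ hFzt.le
              exact mul_le_mul_of_nonneg_left hys2 (by norm_num)
      have step3 : (2 * (min 1 (dx/r))^γ) * (2 * (2 * (min 1 (dy/r))^γ) * min 1 (dz/t))
          = 8 * ((min 1 (dx/r))^γ * (min 1 (dy/r))^γ) * min 1 (dz/t) := by ring
      calc (min 1 (dx*dz/s^2))^γ * (min 1 (dz*dy/t^2))^γ
          ≤ 4 * ((2 * (min 1 (dx/r))^γ) * (2 * (2 * (min 1 (dy/r))^γ) * min 1 (dz/t))) := by
            apply le_trans step1
            exact mul_le_mul_of_nonneg_left step2 (by norm_num)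
        _ = 32 * (((min 1 (dx/r))^γ * (min 1 (dy/r))^γ) * min 1 (dz/t)) := by rw [step3]; ring
        _ ≤ 32 * ((min 1 (dx*dy/r^2))^γ * min 1 (dz/t)) := by
            apply mul_le_mul_of_nonneg_left _ (by norm_num)
            exact mul_le_mul_of_nonneg_right hmγ hFzt.le
    -- now divide
    have hden : (0:ℝ) < s^N * t^N * min t dz := by
      apply mul_pos (mul_pos hspos htpos) (lt_min ht hdz)
    have lhs_le : (min 1 (dx*dz/s^2))^γ * (min 1 (dz*dy/t^2))^γ / (s^N * t^N * min t dz)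
        ≤ 32 * (min 1 (dx*dy/r^2))^γ / (s^N * t^N * t) := by
      rw [div_le_div_iff₀ hden (by positivity)]
      rw [hmin]
      calc (min 1 (dx*dz/s^2))^γ * (min 1 (dz*dy/t^2))^γ * (s^N * t^N * t)
          ≤ (32 * ((min 1 (dx*dy/r^2))^γ * min 1 (dz/t))) * (s^N * t^N * t) :=
            mul_le_mul_of_nonneg_right hnum (by positivity)
        _ = 32 * (min 1 (dx*dy/r^2))^γ * (s^N * t^N * (t * min 1 (dz/t))) := by ring
    have hrN : r^N ≤ 2^N * s^N := by
      calc r^N ≤ (2*s)^N := Real.rpow_le_rpow hr.le hr2s hN.le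
        _ = 2^N * s^N := Real.mul_rpow (by norm_num) hs.le
    have htexp : t^(-(N+1)) = ((t^N)*t)⁻¹ := by
      rw [Real.rpow_neg ht.le, Real.rpow_add ht, Real.rpow_one]
    have final : 32 * (min 1 (dx*dy/r^2))^γ / (s^N * t^N * t)
        ≤ 2^N * 32 * ((min 1 (dx*dy/r^2))^γ / r^N) * t^(-(N+1)) := by
      rw [htexp]
      rw [show 2^N * 32 * ((min 1 (dx*dy/r^2))^γ / r^N) * ((t^N)*t)⁻¹
          = 2^N * 32 * (min 1 (dx*dy/r^2))^γ / (r^N * (t^N * t)) from by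
            field_simp]
      rw [div_le_div_iff₀ (by positivity) (by positivity)]
      calc 32 * (min 1 (dx*dy/r^2))^γ * (r^N * (t^N*t))
          ≤ 32 * (min 1 (dx*dy/r^2))^γ * ((2^N * s^N) * (t^N*t)) := by
            apply mul_le_mul_of_nonneg_left _ (by positivity)
            exact mul_le_mul_of_nonneg_right hrN (by positivity)
        _ = 2^N * 32 * (min 1 (dx*dy/r^2))^γ * (s^N * t^N * t) := by ring
    calc (min 1 (dx*dz/s^2))^γ * (min 1 (dz*dy/t^2))^γ / (s^N * t^N * min t dz)
        ≤ 2^N * 32 * ((min 1 (dx*dy/r^2))^γ / r^N) * t^(-(N+1)) := lhs_le.trans final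
      _ ≤ 2^N * 32 * ((min 1 (dx*dy/r^2))^γ / r^N) * (s^(-(N+1)) + t^(-(N+1))) := by
          apply mul_le_mul_of_nonneg_left _ (by positivity)
          have : (0:ℝ) < s^(-(N+1)) := Real.rpow_pos_of_pos hs _
          linarith
  -- Case s ≤ t
  · have hr2t : r ≤ 2*t := by linarith
    have hxt2 : (min 1 (dx/t))^γ ≤ 2 * (min 1 (dx/r))^γ := by
      calc (min 1 (dx/t))^γ ≤ (2 * min 1 (dx/r))^γ :=
            Real.rpow_le_rpow hFxt.le (min_double' hdx.le hr ht hr2t) hγ0.le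
        _ = 2^γ * (min 1 (dx/r))^γ := Real.mul_rpow (by norm_num) hFxr.le
        _ ≤ 2 * (min 1 (dx/r))^γ := mul_le_mul_of_nonneg_right h2γ (by positivity)
    have hyt2 : (min 1 (dy/t))^γ ≤ 2 * (min 1 (dy/r))^γ := by
      calc (min 1 (dy/t))^γ ≤ (2 * min 1 (dy/r))^γ :=
            Real.rpow_le_rpow hFyt.le (min_double' hdy.le hr ht hr2t) hγ0.le
        _ = 2^γ * (min 1 (dy/r))^γ := Real.mul_rpow (by norm_num) hFyr.le
        _ ≤ 2 * (min 1 (dy/r))^γ := mul_le_mul_of_nonneg_right h2γ (by positivity)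
    have hc2 := claim2 hγ1 hγ2 hs ht hdx hdz hst
    have hnum : (min 1 (dx*dz/s^2))^γ * (min 1 (dz*dy/t^2))^γ
        ≤ 16 * (t/s) * ((min 1 (dx*dy/r^2))^γ * min 1 (dz/t)) := by
      have step1 : (min 1 (dx*dz/s^2))^γ * (min 1 (dz*dy/t^2))^γ
          ≤ 4 * (((min 1 (dx/s))^γ * (min 1 (dz/s))^γ * (min 1 (dz/t))^γ) * (min 1 (dy/t))^γ) := by
        calc (min 1 (dx*dz/s^2))^γ * (min 1 (dz*dy/t^2))^γ
            ≤ (2 * ((min 1 (dx/s))^γ * (min 1 (dz/s))^γ))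
              * (2 * ((min 1 (dz/t))^γ * (min 1 (dy/t))^γ)) :=
              mul_le_mul hAγ hBγ (Real.rpow_pos_of_pos hB0 γ).le (by positivity)
          _ = 4 * (((min 1 (dx/s))^γ * (min 1 (dz/s))^γ * (min 1 (dz/t))^γ) * (min 1 (dy/t))^γ) := by
              ring
      have step2 : ((min 1 (dx/s))^γ * (min 1 (dz/s))^γ * (min 1 (dz/t))^γ) * (min 1 (dy/t))^γ
          ≤ ((t/s) * (2 * (min 1 (dx/r))^γ) * min 1 (dz/t)) * (2 * (min 1 (dy/r))^γ) := by
        apply mul_le_mul _ hyt2 (by positivity) (by positivity)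
        calc (min 1 (dx/s))^γ * (min 1 (dz/s))^γ * (min 1 (dz/t))^γ
            ≤ (t/s) * (min 1 (dx/t))^γ * (min 1 (dz/t)) := hc2
          _ ≤ (t/s) * (2 * (min 1 (dx/r))^γ) * (min 1 (dz/t)) := by
              apply mul_le_mul_of_nonneg_right _ hFzt.le
              exact mul_le_mul_of_nonneg_left hxt2 (by positivity)
      calc (min 1 (dx*dz/s^2))^γ * (min 1 (dz*dy/t^2))^γ
          ≤ 4 * (((t/s) * (2 * (min 1 (dx/r))^γ) * min 1 (dz/t)) * (2 * (min 1 (dy/r))^γ)) := by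
            apply le_trans step1
            exact mul_le_mul_of_nonneg_left step2 (by norm_num)
        _ = 16 * (t/s) * (((min 1 (dx/r))^γ * (min 1 (dy/r))^γ) * min 1 (dz/t)) := by ring
        _ ≤ 16 * (t/s) * ((min 1 (dx*dy/r^2))^γ * min 1 (dz/t)) := by
            apply mul_le_mul_of_nonneg_left _ (by positivity)
            exact mul_le_mul_of_nonneg_right hmγ hFzt.le
    have hden : (0:ℝ) < s^N * t^N * min t dz := by
      apply mul_pos (mul_pos hspos htpos) (lt_min ht hdz)
    have lhs_le : (min 1 (dx*dz/s^2))^γ * (min 1 (dz*dy/t^2))^γ / (s^N * t^N * min t dz)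
        ≤ 16 * (min 1 (dx*dy/r^2))^γ / (s^N * s * t^N) := by
      rw [div_le_div_iff₀ hden (by positivity)]
      rw [hmin]
      calc (min 1 (dx*dz/s^2))^γ * (min 1 (dz*dy/t^2))^γ * (s^N * s * t^N)
          ≤ (16 * (t/s) * ((min 1 (dx*dy/r^2))^γ * min 1 (dz/t))) * (s^N * s * t^N) :=
            mul_le_mul_of_nonneg_right hnum (by positivity)
        _ = 16 * ((min 1 (dx*dy/r^2))^γ * min 1 (dz/t)) * ((t/s) * (s^N * s * t^N)) := by ring
        _ = 16 * ((min 1 (dx*dy/r^2))^γ * min 1 (dz/t)) * (s^N * t^N * t) := by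
            rw [show (t/s) * (s^N * s * t^N) = s^N * t^N * t from by
              field_simp]
        _ = 16 * (min 1 (dx*dy/r^2))^γ * (s^N * t^N * (t * min 1 (dz/t))) := by ring
    have hrN : r^N ≤ 2^N * t^N := by
      calc r^N ≤ (2*t)^N := Real.rpow_le_rpow hr.le hr2t hN.le
        _ = 2^N * t^N := Real.mul_rpow (by norm_num) ht.le
    have hsexp : s^(-(N+1)) = ((s^N)*s)⁻¹ := by
      rw [Real.rpow_neg hs.le, Real.rpow_add hs, Real.rpow_one]
    have final : 16 * (min 1 (dx*dy/r^2))^γ / (s^N * s * t^N)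
        ≤ 2^N * 32 * ((min 1 (dx*dy/r^2))^γ / r^N) * s^(-(N+1)) := by
      rw [hsexp]
      rw [show 2^N * 32 * ((min 1 (dx*dy/r^2))^γ / r^N) * ((s^N)*s)⁻¹
          = 2^N * 32 * (min 1 (dx*dy/r^2))^γ / (r^N * (s^N * s)) from by
            field_simp]
      rw [div_le_div_iff₀ (by positivity) (by positivity)]
      calc 16 * (min 1 (dx*dy/r^2))^γ * (r^N * (s^N*s))
          ≤ 16 * (min 1 (dx*dy/r^2))^γ * ((2^N * t^N) * (s^N*s)) := by
            apply mul_le_mul_of_nonneg_left _ (by positivity)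
            exact mul_le_mul_of_nonneg_right hrN (by positivity)
        _ = 16 * ((2:ℝ)^N * (min 1 (dx*dy/r^2))^γ * (s^N * s * t^N)) := by ring
        _ ≤ 32 * ((2:ℝ)^N * (min 1 (dx*dy/r^2))^γ * (s^N * s * t^N)) := by
            have hpos : (0:ℝ) < (2:ℝ)^N * (min 1 (dx*dy/r^2))^γ * (s^N * s * t^N) := by positivity
            linarith
        _ = 2^N * 32 * (min 1 (dx*dy/r^2))^γ * (s^N * s * t^N) := by ring
    calc (min 1 (dx*dz/s^2))^γ * (min 1 (dz*dy/t^2))^γ / (s^N * t^N * min t dz)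
        ≤ 2^N * 32 * ((min 1 (dx*dy/r^2))^γ / r^N) * s^(-(N+1)) := lhs_le.trans final
      _ ≤ 2^N * 32 * ((min 1 (dx*dy/r^2))^γ / r^N) * (s^(-(N+1)) + t^(-(N+1))) := by
          apply mul_le_mul_of_nonneg_left _ (by positivity)
          have : (0:ℝ) < t^(-(N+1)) := Real.rpow_pos_of_pos ht _
          linarith

end ThreeGHelpers

theorem threeG_estimate
    (d : ℕ) (hd : 2 ≤ d) (α : ℝ) (hα : α ∈ Set.Ioo (1 : ℝ) 2) :
    ∃ C : ℝ, 0 < C ∧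
      ∀ (D : Set (EuclideanSpace ℝ (Fin d))),
        D.Nonempty → Bornology.IsBounded D → IsOpen D →
        ∀ x ∈ D, ∀ y ∈ D, ∀ z ∈ D, x ≠ y → x ≠ z → y ≠ z →
          greenG d α D x z * greenG d α D z y / min (dist z y) (Metric.infDist z Dᶜ)
            ≤ C * greenG d α D x y
              * (dist x z ^ (-((d : ℝ) + 1 - α)) + dist z y ^ (-((d : ℝ) + 1 - α))) := by
  refine ⟨2^(d+5), by positivity, ?_⟩
  intro D hne hbdd hopen x hx y hy z hz hxy hxz hyz
  haveI : Nonempty (Fin d) := ⟨⟨0, by omega⟩⟩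
  have hcne : Dᶜ.Nonempty := by
    rw [Set.nonempty_compl]
    intro he; rw [he] at hbdd
    exact NormedSpace.unbounded_univ ℝ (EuclideanSpace ℝ (Fin d)) hbdd
  have hccl : IsClosed Dᶜ := hopen.isClosed_compl
  have hdx : 0 < Metric.infDist x Dᶜ :=
    (hccl.notMem_iff_infDist_pos hcne).1 (by simpa using hx)
  have hdy : 0 < Metric.infDist y Dᶜ :=
    (hccl.notMem_iff_infDist_pos hcne).1 (by simpa using hy)
  have hdz : 0 < Metric.infDist z Dᶜ :=
    (hccl.notMem_iff_infDist_pos hcne).1 (by simpa using hz)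
  have hs : 0 < dist x z := dist_pos.2 hxz
  have ht : 0 < dist z y := dist_pos.2 (Ne.symm hyz)
  have hr : 0 < dist x y := dist_pos.2 hxy
  have l1 : Metric.infDist x Dᶜ ≤ Metric.infDist z Dᶜ + dist x z :=
    Metric.infDist_le_infDist_add_dist
  have l2 : Metric.infDist z Dᶜ ≤ Metric.infDist x Dᶜ + dist x z := by
    have h := Metric.infDist_le_infDist_add_dist (x := z) (y := x) (s := Dᶜ)
    rwa [dist_comm] at h
  have l3 : Metric.infDist z Dᶜ ≤ Metric.infDist y Dᶜ + dist z y :=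
    Metric.infDist_le_infDist_add_dist
  have l4 : Metric.infDist y Dᶜ ≤ Metric.infDist z Dᶜ + dist z y := by
    have h := Metric.infDist_le_infDist_add_dist (x := y) (y := z) (s := Dᶜ)
    rwa [dist_comm] at h
  have tri : dist x y ≤ dist x z + dist z y := dist_triangle x z y
  have hN : 0 < (d:ℝ) - α := by
    have h2 : (2:ℝ) ≤ (d:ℝ) := by exact_mod_cast hd
    linarith [hα.2]
  have hγ1 : 1/2 < α/2 := by linarith [hα.1]
  have hγ2 : α/2 < 1 := by linarith [hα.2]
  have key := key3G hγ1 hγ2 hN hs ht hr hdx hdy hdz l1 l2 l3 l4 tri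
  have hexp : -((d:ℝ) + 1 - α) = -(((d:ℝ) - α) + 1) := by ring
  rw [hexp]
  simp only [greenG]
  rw [div_mul_div_comm, div_div]
  apply le_trans key
  have hC : (2:ℝ)^((d:ℝ)-α) * 32 ≤ 2^(d+5) := by
    have h1 : (2:ℝ)^((d:ℝ)-α) ≤ (2:ℝ)^((d:ℝ)) :=
      Real.rpow_le_rpow_of_exponent_le one_le_two (by linarith [hα.1])
    have h2 : (2:ℝ)^((d:ℝ)) = (2:ℝ)^d := Real.rpow_natCast 2 d
    have h3 : ((2:ℝ))^(d+5) = (2:ℝ)^d * 32 := by rw [pow_add]; norm_num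
    rw [h3]
    nlinarith [pow_pos (by norm_num : (0:ℝ) < 2) d]
  apply mul_le_mul_of_nonneg_right _ (by positivity)
  apply mul_le_mul_of_nonneg_right hC (by positivity)
end

section
/- Let d ≥ 2 be an integer and α ∈ (1, 2). There exists a constant C > 0, depending only on d and α, such that for every nonempty bounded open set D ⊂ ℝ^d and all pairwise distinct x, y, z ∈ D, [ g_D(x,z) / min( |x-z|, δ_D(x) ) ] · [ g_D(z,y) / min( |z-y|, δ_D(z) ) ] ≤ C · [ g_D(x,y) / min( |x-y|, δ_D(x) ) ] · ( |x-z|^{-(d+1-α)} + |z-y|^{-(d+1-α)} ), where g_D(u,v) = |u-v|^{-(d-α)} · ( min( 1, δ_D(u) δ_D(v) / |u-v|² ) )^{α/2}. -/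
open MeasureTheory Metric Set Filter

section ThreeGHelpers


private lemma minh1 {ρ u : ℝ} (hρ : 0 < ρ) (hu : 0 < u) : min ρ u * (ρ + u) ≤ 2 * (ρ * u) := by
  rcases le_total ρ u with h | h
  · rw [min_eq_left h]; nlinarith
  · rw [min_eq_right h]; nlinarith

private lemma minh2 {ρ u : ℝ} (hρ : 0 < ρ) (hu : 0 < u) : ρ * u ≤ min ρ u * (ρ + u) := by
  rcases le_total ρ u with h | h
  · rw [min_eq_left h]; nlinarith
  · rw [min_eq_right h]; nlinarith

private lemma keyC1 {a b c r s t : ℝ} (ha : 0 < a) (hb : 0 < b) (hc : 0 < c)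
    (hr : 0 < r) (hs : 0 < s) (ht : 0 < t)
    (hba : b ≤ a + r) (hac : a ≤ c + s) (hcb : c ≤ b + t) :
    min s c * min t b * min r a ≤ 64 * (min r b * (min s a * min t c)) := by
  have hP : (0:ℝ) < (s+c)*((t+b)*(r+a)) := by positivity
  refine le_of_mul_le_mul_right ?_ hP
  calc min s c * min t b * min r a * ((s+c)*((t+b)*(r+a)))
      = (min s c * (s+c)) * ((min t b * (t+b)) * (min r a * (r+a))) := by ring
    _ ≤ (2*(s*c)) * ((2*(t*b)) * (2*(r*a))) := by
        apply mul_le_mul (minh1 hs hc)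
          (mul_le_mul (minh1 ht hb) (minh1 hr ha) (by positivity) (by positivity))
          (by positivity) (by positivity)
    _ = 8 * ((r*b) * ((s*a) * (t*c))) := by ring
    _ ≤ 8 * ((min r b * (r+b)) * ((min s a * (s+a)) * (min t c * (t+c)))) := by
        apply mul_le_mul_of_nonneg_left _ (by norm_num)
        apply mul_le_mul (minh2 hr hb)
          (mul_le_mul (minh2 hs ha) (minh2 ht hc) (by positivity) (by positivity))
          (by positivity) (by positivity)
    _ = (min r b * (min s a * min t c)) * ((r+b)*((s+a)*(t+c))) * 8 := by ring
    _ ≤ (min r b * (min s a * min t c)) * ((2*(r+a))*((2*(s+c))*(2*(t+b)))) * 8 := by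
        apply mul_le_mul_of_nonneg_right _ (by norm_num)
        apply mul_le_mul_of_nonneg_left _ (by positivity)
        apply mul_le_mul (by linarith)
          (mul_le_mul (by linarith) (by linarith) (by positivity) (by positivity))
          (by positivity) (by positivity)
    _ = 64 * (min r b * (min s a * min t c)) * ((s+c)*((t+b)*(r+a))) := by ring

private lemma keyC2 {b c r s t : ℝ} (hb : 0 < b) (hc : 0 < c)
    (hr : 0 < r) (hs : 0 < s) (ht : 0 < t)
    (hrst : r ≤ s + t) (hcb : c ≤ b + t) :
    r * (min s c * min t b) ≤ 4 * (s * (t * min r b)) := by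
  have hH : c*(r+b) ≤ (s+c)*(t+b) := by nlinarith
  have hP : (0:ℝ) < (s+c)*((t+b)*(r+b)) := by positivity
  refine le_of_mul_le_mul_right ?_ hP
  calc r * (min s c * min t b) * ((s+c)*((t+b)*(r+b)))
      = (min s c * (s+c)) * ((min t b * (t+b)) * (r*(r+b))) := by ring
    _ ≤ (2*(s*c)) * ((2*(t*b)) * (r*(r+b))) := by
        apply mul_le_mul (minh1 hs hc)
          (mul_le_mul (minh1 ht hb) le_rfl (by positivity) (by positivity))
          (by positivity) (by positivity)
    _ = (4*(s*(t*(b*r)))) * (c*(r+b)) := by ring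
    _ ≤ (4*(s*(t*(b*r)))) * ((s+c)*(t+b)) := by
        apply mul_le_mul_of_nonneg_left hH (by positivity)
    _ = (4*(s*t)) * ((s+c)*(t+b)) * (r*b) := by ring
    _ ≤ (4*(s*t)) * ((s+c)*(t+b)) * (min r b * (r+b)) := by
        apply mul_le_mul_of_nonneg_left (minh2 hr hb) (by positivity)
    _ = 4 * (s * (t * min r b)) * ((s+c)*((t+b)*(r+b))) := by ring

private lemma minprod {ρ u v : ℝ} (hρ : 0 < ρ) (hu : 0 < u) (hv : 0 < v)
    (h1 : u ≤ v + ρ) (h2 : v ≤ u + ρ) :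
    min (ρ^2) (u*v) ≤ 2 * (min ρ u * min ρ v) := by
  rcases le_total u ρ with h | h <;> rcases le_total v ρ with h' | h'
  · rw [min_eq_right h, min_eq_right h']
    calc min (ρ^2) (u*v) ≤ u*v := min_le_right _ _
      _ ≤ 2*(u*v) := by nlinarith
  · rw [min_eq_right h, min_eq_left h']
    calc min (ρ^2) (u*v) ≤ u*v := min_le_right _ _
      _ ≤ 2*(u*ρ) := by nlinarith
  · rw [min_eq_left h, min_eq_right h']
    calc min (ρ^2) (u*v) ≤ u*v := min_le_right _ _
      _ ≤ 2*(ρ*v) := by nlinarith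
  · rw [min_eq_left h, min_eq_left h']
    calc min (ρ^2) (u*v) ≤ ρ^2 := min_le_left _ _
      _ ≤ 2*(ρ*ρ) := by nlinarith

private lemma minprod' {ρ u v : ℝ} (hρ : 0 < ρ) (hu : 0 < u) (hv : 0 < v) :
    min ρ u * min ρ v ≤ min (ρ^2) (u*v) := by
  refine le_min ?_ ?_
  · have := min_le_left ρ u; have := min_le_left ρ v
    nlinarith [lt_min hρ hu, lt_min hρ hv]
  · have := min_le_right ρ u; have := min_le_right ρ v
    nlinarith [lt_min hρ hu, lt_min hρ hv]

private lemma es2 {s : ℝ} (hs : 0 < s) (α : ℝ) : ((s^2:ℝ))^(α/2) = s^α := by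
  rw [← Real.rpow_natCast s 2, ← Real.rpow_mul hs.le]
  congr 1; push_cast; ring

private lemma mineq {s a c : ℝ} (hs : 0 < s) :
    min 1 (a*c/s^2) = min (s^2) (a*c) / s^2 := by
  rw [← min_div_div_right (by positivity : (0:ℝ) ≤ s^2) (s^2) (a*c),
    div_self (by positivity : (s^2:ℝ) ≠ 0)]

set_option maxHeartbeats 1000000 in
private lemma master (d : ℕ) (hd : 2 ≤ d) {α : ℝ} (hα1 : 1 < α) (hα2 : α < 2)
    {a b c r s t : ℝ} (ha : 0 < a) (hb : 0 < b) (hc : 0 < c)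
    (hr : 0 < r) (hs : 0 < s) (ht : 0 < t)
    (hba : b ≤ a + r) (hab : a ≤ b + r) (hacs : a ≤ c + s) (hcas : c ≤ a + s)
    (hcbt : c ≤ b + t) (hbct : b ≤ c + t) (hrst : r ≤ s + t) :
    (min 1 (a * c / s ^ 2)) ^ (α/2) / s ^ ((d:ℝ) - α) / min s a
      * ((min 1 (c * b / t ^ 2)) ^ (α/2) / t ^ ((d:ℝ) - α) / min t c)
    ≤ 2^(d+8) * ((min 1 (a * b / r ^ 2)) ^ (α/2) / r ^ ((d:ℝ) - α) / min r a)
      * (s ^ (-((d:ℝ) + 1 - α)) + t ^ (-((d:ℝ) + 1 - α))) := by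
  have hm1 : 0 < min s a := lt_min hs ha
  have hm2 : 0 < min s c := lt_min hs hc
  have hm3 : 0 < min t c := lt_min ht hc
  have hm4 : 0 < min t b := lt_min ht hb
  have hm5 : 0 < min r a := lt_min hr ha
  have hm6 : 0 < min r b := lt_min hr hb
  have hd2 : (2:ℝ) ≤ (d:ℝ) := by exact_mod_cast hd
  have hEpos : (0:ℝ) < (d:ℝ)+1-α := by linarith
  -- upper bounds for the two numerator factors
  have hXb1 : (min 1 (a*c/s^2))^(α/2) ≤ 2*((min s a)^(α/2)*(min s c)^(α/2)/s^α) := by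
    have hX1 : min 1 (a*c/s^2) ≤ 2*(min s a*min s c)/s^2 := by
      rw [mineq hs]
      exact (div_le_div_iff_of_pos_right (by positivity)).mpr (minprod hs ha hc hacs hcas)
    have h2a : (2:ℝ)^(α/2) ≤ 2 := by
      calc (2:ℝ)^(α/2) ≤ (2:ℝ)^(1:ℝ) :=
            Real.rpow_le_rpow_of_exponent_le one_le_two (by linarith)
        _ = 2 := Real.rpow_one 2
    calc (min 1 (a*c/s^2))^(α/2) ≤ (2*(min s a*min s c)/s^2)^(α/2) :=
          Real.rpow_le_rpow (by positivity) hX1 (by linarith)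
      _ = 2^(α/2)*((min s a)^(α/2)*(min s c)^(α/2))/s^α := by
          rw [Real.div_rpow (by positivity) (by positivity),
            Real.mul_rpow (by norm_num) (by positivity),
            Real.mul_rpow hm1.le hm2.le, es2 hs]
      _ = ((min s a)^(α/2)*(min s c)^(α/2)/s^α) * 2^(α/2) := by ring
      _ ≤ ((min s a)^(α/2)*(min s c)^(α/2)/s^α) * 2 :=
          mul_le_mul_of_nonneg_left h2a (by positivity)
      _ = 2*((min s a)^(α/2)*(min s c)^(α/2)/s^α) := by ring
  have hXb2 : (min 1 (c*b/t^2))^(α/2) ≤ 2*((min t c)^(α/2)*(min t b)^(α/2)/t^α) := by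
    have hX2 : min 1 (c*b/t^2) ≤ 2*(min t c*min t b)/t^2 := by
      rw [mineq ht]
      exact (div_le_div_iff_of_pos_right (by positivity)).mpr (minprod ht hc hb hcbt hbct)
    have h2a : (2:ℝ)^(α/2) ≤ 2 := by
      calc (2:ℝ)^(α/2) ≤ (2:ℝ)^(1:ℝ) :=
            Real.rpow_le_rpow_of_exponent_le one_le_two (by linarith)
        _ = 2 := Real.rpow_one 2
    calc (min 1 (c*b/t^2))^(α/2) ≤ (2*(min t c*min t b)/t^2)^(α/2) :=
          Real.rpow_le_rpow (by positivity) hX2 (by linarith)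
      _ = 2^(α/2)*((min t c)^(α/2)*(min t b)^(α/2))/t^α := by
          rw [Real.div_rpow (by positivity) (by positivity),
            Real.mul_rpow (by norm_num) (by positivity),
            Real.mul_rpow hm3.le hm4.le, es2 ht]
      _ = ((min t c)^(α/2)*(min t b)^(α/2)/t^α) * 2^(α/2) := by ring
      _ ≤ ((min t c)^(α/2)*(min t b)^(α/2)/t^α) * 2 :=
          mul_le_mul_of_nonneg_left h2a (by positivity)
      _ = 2*((min t c)^(α/2)*(min t b)^(α/2)/t^α) := by ring
  -- lower bound for the denominator factor
  have hXb3 : (min r a)^(α/2)*(min r b)^(α/2)/r^α ≤ (min 1 (a*b/r^2))^(α/2) := by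
    have hX3 : min r a*min r b/r^2 ≤ min 1 (a*b/r^2) := by
      rw [mineq hr]
      exact (div_le_div_iff_of_pos_right (by positivity)).mpr (minprod' hr ha hb)
    calc (min r a)^(α/2)*(min r b)^(α/2)/r^α = (min r a*min r b/r^2)^(α/2) := by
          rw [Real.div_rpow (by positivity) (by positivity),
            Real.mul_rpow hm5.le hm6.le, es2 hr]
      _ ≤ (min 1 (a*b/r^2))^(α/2) :=
          Real.rpow_le_rpow (by positivity) hX3 (by linarith)
  -- the key combined inequality
  have em1 : (min s a)^(1-α/2)*(min s a)^(α/2) = min s a := by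
    rw [← Real.rpow_add hm1, show (1-α/2)+(α/2) = (1:ℝ) by ring, Real.rpow_one]
  have em3 : (min t c)^(1-α/2)*(min t c)^(α/2) = min t c := by
    rw [← Real.rpow_add hm3, show (1-α/2)+(α/2) = (1:ℝ) by ring, Real.rpow_one]
  have em5 : (min r a)^(1-α/2)*(min r a)^(α/2) = min r a := by
    rw [← Real.rpow_add hm5, show (1-α/2)+(α/2) = (1:ℝ) by ring, Real.rpow_one]
  have hKEYm : (min s c)^(α/2)*(min t b)^(α/2)*((min r a)^(1-α/2)*r^(α-1))
      ≤ 32*((min r b)^(α/2)*((min s a)^(1-α/2)*((min t c)^(1-α/2)*(s^(α-1)*t^(α-1))))) := by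
    have hC1 : min s c*min t b*min r a ≤ 64*(min r b*(min s a*min t c)) :=
      keyC1 ha hb hc hr hs ht hba hacs hcbt
    have hC2 : r*(min s c*min t b) ≤ 4*(s*(t*min r b)) :=
      keyC2 hb hc hr hs ht hrst hcbt
    have hK1 : (min s c*min t b*min r a)^(1-α/2) ≤ (64*(min r b*(min s a*min t c)))^(1-α/2) :=
      Real.rpow_le_rpow (by positivity) hC1 (by linarith)
    have hK2 : (r*(min s c*min t b))^(α-1) ≤ (4*(s*(t*min r b)))^(α-1) :=
      Real.rpow_le_rpow (by positivity) hC2 (by linarith)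
    have em2 : (min s c)^(1-α/2)*(min s c)^(α-1) = (min s c)^(α/2) := by
      rw [← Real.rpow_add hm2]; congr 1; ring
    have em4 : (min t b)^(1-α/2)*(min t b)^(α-1) = (min t b)^(α/2) := by
      rw [← Real.rpow_add hm4]; congr 1; ring
    have em6 : (min r b)^(1-α/2)*(min r b)^(α-1) = (min r b)^(α/2) := by
      rw [← Real.rpow_add hm6]; congr 1; ring
    have eL : (min s c*min t b*min r a)^(1-α/2) * (r*(min s c*min t b))^(α-1)
        = (min s c)^(α/2)*(min t b)^(α/2)*((min r a)^(1-α/2)*r^(α-1)) := by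
      rw [Real.mul_rpow (x := min s c*min t b) (y := min r a) (by positivity) hm5.le,
        Real.mul_rpow (x := min s c) (y := min t b) hm2.le hm4.le,
        Real.mul_rpow (x := r) (y := min s c*min t b) hr.le (by positivity),
        Real.mul_rpow (x := min s c) (y := min t b) hm2.le hm4.le]
      linear_combination ((min t b)^(1-α/2)*(min t b)^(α-1)*(min r a)^(1-α/2)*r^(α-1))*em2
        + ((min s c)^(α/2)*(min r a)^(1-α/2)*r^(α-1))*em4
    have eR : (64*(min r b*(min s a*min t c)))^(1-α/2) * (4*(s*(t*min r b)))^(α-1)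
        = (64^(1-α/2)*4^(α-1))
          * ((min r b)^(α/2)*((min s a)^(1-α/2)*((min t c)^(1-α/2)*(s^(α-1)*t^(α-1))))) := by
      rw [Real.mul_rpow (x := 64) (y := min r b*(min s a*min t c)) (by norm_num) (by positivity),
        Real.mul_rpow (x := min r b) (y := min s a*min t c) hm6.le (by positivity),
        Real.mul_rpow (x := min s a) (y := min t c) hm1.le hm3.le,
        Real.mul_rpow (x := 4) (y := s*(t*min r b)) (by norm_num) (by positivity),
        Real.mul_rpow (x := s) (y := t*min r b) hs.le (by positivity),
        Real.mul_rpow (x := t) (y := min r b) ht.le hm6.le]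
      linear_combination (64^(1-α/2)*4^(α-1)*((min s a)^(1-α/2)*((min t c)^(1-α/2)*(s^(α-1)*t^(α-1)))))*em6
    have h64 : (64:ℝ)^(1-α/2)*(4:ℝ)^(α-1) ≤ 32 := by
      have hA : (64:ℝ)^(1-α/2) ≤ 8 := by
        calc (64:ℝ)^(1-α/2) ≤ (64:ℝ)^((1:ℝ)/2) :=
              Real.rpow_le_rpow_of_exponent_le (by norm_num) (by linarith)
          _ = 8 := by
              rw [show (64:ℝ) = 8^(2:ℕ) by norm_num, ← Real.rpow_natCast 8 2,
                ← Real.rpow_mul (by norm_num : (0:ℝ) ≤ 8)]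
              norm_num
      have hB : (4:ℝ)^(α-1) ≤ 4 := by
        calc (4:ℝ)^(α-1) ≤ (4:ℝ)^(1:ℝ) :=
              Real.rpow_le_rpow_of_exponent_le (by norm_num) (by linarith)
          _ = 4 := Real.rpow_one 4
      nlinarith [Real.rpow_nonneg (by norm_num : (0:ℝ) ≤ 64) (1-α/2),
        Real.rpow_nonneg (by norm_num : (0:ℝ) ≤ 4) (α-1)]
    calc (min s c)^(α/2)*(min t b)^(α/2)*((min r a)^(1-α/2)*r^(α-1))
        = (min s c*min t b*min r a)^(1-α/2) * (r*(min s c*min t b))^(α-1) := eL.symm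
      _ ≤ (64*(min r b*(min s a*min t c)))^(1-α/2) * (4*(s*(t*min r b)))^(α-1) :=
          mul_le_mul hK1 hK2 (Real.rpow_nonneg (by positivity) _)
            (Real.rpow_nonneg (by positivity) _)
      _ = (64^(1-α/2)*4^(α-1))
          * ((min r b)^(α/2)*((min s a)^(1-α/2)*((min t c)^(1-α/2)*(s^(α-1)*t^(α-1))))) := eR
      _ ≤ 32*((min r b)^(α/2)*((min s a)^(1-α/2)*((min t c)^(1-α/2)*(s^(α-1)*t^(α-1))))) :=
          mul_le_mul_of_nonneg_right h64 (by positivity)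
  -- exponent-merging identities
  have erA : r^((d:ℝ)-α)*r^α = r^(α-1)*r^((d:ℝ)+1-α) := by
    rw [← Real.rpow_add hr, ← Real.rpow_add hr]; congr 1; ring
  have esA : s^(-((d:ℝ)+1-α))*(s^((d:ℝ)-α)*s^α) = s^(α-1) := by
    rw [← Real.rpow_add hs, ← Real.rpow_add hs]; congr 1; ring
  have etA : t^(-((d:ℝ)+1-α))*(t^((d:ℝ)-α)*t^α) = t^(α-1) := by
    rw [← Real.rpow_add ht, ← Real.rpow_add ht]; congr 1; ring
  have esd : s^((d:ℝ)-α)*s^α = s^(α-1)*s^((d:ℝ)+1-α) := by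
    rw [← Real.rpow_add hs, ← Real.rpow_add hs]; congr 1; ring
  have etd : t^((d:ℝ)-α)*t^α = t^(α-1)*t^((d:ℝ)+1-α) := by
    rw [← Real.rpow_add ht, ← Real.rpow_add ht]; congr 1; ring
  have lhs_eq : (min 1 (a*c/s^2))^(α/2)/s^((d:ℝ)-α)/min s a
        * ((min 1 (c*b/t^2))^(α/2)/t^((d:ℝ)-α)/min t c)
      = ((min 1 (a*c/s^2))^(α/2)*(min 1 (c*b/t^2))^(α/2))
        / ((s^((d:ℝ)-α)*min s a)*(t^((d:ℝ)-α)*min t c)) := by ring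
  have rhs_eq : 2^(d+8)*((min 1 (a*b/r^2))^(α/2)/r^((d:ℝ)-α)/min r a)
        *(s^(-((d:ℝ)+1-α)) + t^(-((d:ℝ)+1-α)))
      = (2^(d+8)*(min 1 (a*b/r^2))^(α/2)*(s^(-((d:ℝ)+1-α)) + t^(-((d:ℝ)+1-α))))
        / (r^((d:ℝ)-α)*min r a) := by ring
  rw [lhs_eq, rhs_eq, div_le_div_iff₀ (by positivity) (by positivity)]
  have step1 : ((min 1 (a*c/s^2))^(α/2)*(min 1 (c*b/t^2))^(α/2)) * (r^((d:ℝ)-α)*min r a)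
      ≤ (4*(((min s a)^(α/2)*(min s c)^(α/2))*((min t c)^(α/2)*(min t b)^(α/2)))
          *(r^((d:ℝ)-α)*min r a))/(s^α*t^α) := by
    calc ((min 1 (a*c/s^2))^(α/2)*(min 1 (c*b/t^2))^(α/2)) * (r^((d:ℝ)-α)*min r a)
        ≤ ((2*((min s a)^(α/2)*(min s c)^(α/2)/s^α))
            *(2*((min t c)^(α/2)*(min t b)^(α/2)/t^α))) * (r^((d:ℝ)-α)*min r a) := by
          apply mul_le_mul_of_nonneg_right _ (by positivity)
          exact mul_le_mul hXb1 hXb2 (by positivity) (by positivity)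
      _ = _ := by ring
  rcases le_total s t with hst | hst
  · -- case s ≤ t : keep the s-term, r ≤ 2t
    have hfinT : r^((d:ℝ)+1-α) ≤ 2^d*t^((d:ℝ)+1-α) := by
      calc r^((d:ℝ)+1-α) ≤ (2*t)^((d:ℝ)+1-α) :=
            Real.rpow_le_rpow hr.le (by linarith) (by linarith)
        _ = 2^((d:ℝ)+1-α)*t^((d:ℝ)+1-α) := Real.mul_rpow (by norm_num) ht.le
        _ ≤ 2^((d:ℝ))*t^((d:ℝ)+1-α) := by
            apply mul_le_mul_of_nonneg_right
              (Real.rpow_le_rpow_of_exponent_le one_le_two (by linarith))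
              (Real.rpow_nonneg ht.le _)
        _ = 2^d*t^((d:ℝ)+1-α) := by rw [Real.rpow_natCast]
    have core : (4*(((min s a)^(α/2)*(min s c)^(α/2))*((min t c)^(α/2)*(min t b)^(α/2)))
          *(r^((d:ℝ)-α)*min r a))/(s^α*t^α)
        ≤ (2^(d+8)*((min r a)^(α/2)*(min r b)^(α/2))*s^(-((d:ℝ)+1-α))
            *((s^((d:ℝ)-α)*min s a)*(t^((d:ℝ)-α)*min t c)))/r^α := by
      rw [div_le_div_iff₀ (by positivity) (by positivity)]
      calc 4*(((min s a)^(α/2)*(min s c)^(α/2))*((min t c)^(α/2)*(min t b)^(α/2)))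
            *(r^((d:ℝ)-α)*min r a)*r^α
          = ((min s c)^(α/2)*(min t b)^(α/2)*((min r a)^(1-α/2)*r^(α-1)))
            * ((4*((min s a)^(α/2)*((min t c)^(α/2)*(min r a)^(α/2))))*r^((d:ℝ)+1-α)) := by
            linear_combination
              (4*((min s a)^(α/2)*(min s c)^(α/2))*((min t c)^(α/2)*(min t b)^(α/2))*(min r a))*erA
              - (4*((min s a)^(α/2)*(min s c)^(α/2))*((min t c)^(α/2)*(min t b)^(α/2))
                  *(r^(α-1)*r^((d:ℝ)+1-α)))*em5
        _ ≤ (32*((min r b)^(α/2)*((min s a)^(1-α/2)*((min t c)^(1-α/2)*(s^(α-1)*t^(α-1))))))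
            * ((4*((min s a)^(α/2)*((min t c)^(α/2)*(min r a)^(α/2))))*r^((d:ℝ)+1-α)) :=
            mul_le_mul_of_nonneg_right hKEYm (by positivity)
        _ = (128*(min s a*(min t c*((min r a)^(α/2)*(min r b)^(α/2)))))
            * (s^(α-1)*(t^(α-1)*r^((d:ℝ)+1-α))) := by
            linear_combination
              (128*((min r b)^(α/2)*(min r a)^(α/2))*(s^(α-1)*(t^(α-1)*r^((d:ℝ)+1-α)))
                *((min t c)^(1-α/2)*(min t c)^(α/2)))*em1
              + (128*((min r b)^(α/2)*(min r a)^(α/2))*(s^(α-1)*(t^(α-1)*r^((d:ℝ)+1-α)))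
                  *(min s a))*em3
        _ ≤ (128*(min s a*(min t c*((min r a)^(α/2)*(min r b)^(α/2)))))
            * (s^(α-1)*(t^(α-1)*(2^d*t^((d:ℝ)+1-α)))) := by
            apply mul_le_mul_of_nonneg_left _ (by positivity)
            apply mul_le_mul_of_nonneg_left _ (by positivity)
            apply mul_le_mul_of_nonneg_left hfinT (by positivity)
        _ = (128*(2^d:ℝ)) * ((min s a*(min t c*((min r a)^(α/2)*(min r b)^(α/2))))
            * (s^(α-1)*(t^(α-1)*t^((d:ℝ)+1-α)))) := by ring
        _ ≤ (2^(d+8):ℝ) * ((min s a*(min t c*((min r a)^(α/2)*(min r b)^(α/2))))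
            * (s^(α-1)*(t^(α-1)*t^((d:ℝ)+1-α)))) := by
            apply mul_le_mul_of_nonneg_right _ (by positivity)
            rw [pow_add]
            have h2d : (0:ℝ) < 2^d := by positivity
            nlinarith
        _ = 2^(d+8)*((min r a)^(α/2)*(min r b)^(α/2))*s^(-((d:ℝ)+1-α))
            *((s^((d:ℝ)-α)*min s a)*(t^((d:ℝ)-α)*min t c))*(s^α*t^α) := by
            linear_combination
              (-(2^(d+8)*((min r a)^(α/2)*(min r b)^(α/2))*(min s a*min t c))
                *(t^((d:ℝ)-α)*t^α))*esA
              - (2^(d+8)*((min r a)^(α/2)*(min r b)^(α/2))*(min s a*min t c)*s^(α-1))*etd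
    have step3 : (2^(d+8)*((min r a)^(α/2)*(min r b)^(α/2))*s^(-((d:ℝ)+1-α))
          *((s^((d:ℝ)-α)*min s a)*(t^((d:ℝ)-α)*min t c)))/r^α
        ≤ 2^(d+8)*(min 1 (a*b/r^2))^(α/2)*s^(-((d:ℝ)+1-α))
          *((s^((d:ℝ)-α)*min s a)*(t^((d:ℝ)-α)*min t c)) := by
      have e : (2^(d+8)*((min r a)^(α/2)*(min r b)^(α/2))*s^(-((d:ℝ)+1-α))
            *((s^((d:ℝ)-α)*min s a)*(t^((d:ℝ)-α)*min t c)))/r^α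
          = (2^(d+8)*s^(-((d:ℝ)+1-α))*((s^((d:ℝ)-α)*min s a)*(t^((d:ℝ)-α)*min t c)))
            *((min r a)^(α/2)*(min r b)^(α/2)/r^α) := by ring
      rw [e]
      calc (2^(d+8)*s^(-((d:ℝ)+1-α))*((s^((d:ℝ)-α)*min s a)*(t^((d:ℝ)-α)*min t c)))
            *((min r a)^(α/2)*(min r b)^(α/2)/r^α)
          ≤ (2^(d+8)*s^(-((d:ℝ)+1-α))*((s^((d:ℝ)-α)*min s a)*(t^((d:ℝ)-α)*min t c)))
            *(min 1 (a*b/r^2))^(α/2) := mul_le_mul_of_nonneg_left hXb3 (by positivity)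
        _ = _ := by ring
    have main_le := le_trans step1 (le_trans core step3)
    have hT0 : 0 ≤ 2^(d+8)*(min 1 (a*b/r^2))^(α/2)*t^(-((d:ℝ)+1-α))
        *((s^((d:ℝ)-α)*min s a)*(t^((d:ℝ)-α)*min t c)) := by positivity
    have hsplit : 2^(d+8)*(min 1 (a*b/r^2))^(α/2)*(s^(-((d:ℝ)+1-α)) + t^(-((d:ℝ)+1-α)))
          *((s^((d:ℝ)-α)*min s a)*(t^((d:ℝ)-α)*min t c))
        = 2^(d+8)*(min 1 (a*b/r^2))^(α/2)*s^(-((d:ℝ)+1-α))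
            *((s^((d:ℝ)-α)*min s a)*(t^((d:ℝ)-α)*min t c))
          + 2^(d+8)*(min 1 (a*b/r^2))^(α/2)*t^(-((d:ℝ)+1-α))
            *((s^((d:ℝ)-α)*min s a)*(t^((d:ℝ)-α)*min t c)) := by ring
    linarith
  · -- case t ≤ s : keep the t-term, r ≤ 2s
    have hfinS : r^((d:ℝ)+1-α) ≤ 2^d*s^((d:ℝ)+1-α) := by
      calc r^((d:ℝ)+1-α) ≤ (2*s)^((d:ℝ)+1-α) :=
            Real.rpow_le_rpow hr.le (by linarith) (by linarith)
        _ = 2^((d:ℝ)+1-α)*s^((d:ℝ)+1-α) := Real.mul_rpow (by norm_num) hs.le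
        _ ≤ 2^((d:ℝ))*s^((d:ℝ)+1-α) := by
            apply mul_le_mul_of_nonneg_right
              (Real.rpow_le_rpow_of_exponent_le one_le_two (by linarith))
              (Real.rpow_nonneg hs.le _)
        _ = 2^d*s^((d:ℝ)+1-α) := by rw [Real.rpow_natCast]
    have core : (4*(((min s a)^(α/2)*(min s c)^(α/2))*((min t c)^(α/2)*(min t b)^(α/2)))
          *(r^((d:ℝ)-α)*min r a))/(s^α*t^α)
        ≤ (2^(d+8)*((min r a)^(α/2)*(min r b)^(α/2))*t^(-((d:ℝ)+1-α))
            *((s^((d:ℝ)-α)*min s a)*(t^((d:ℝ)-α)*min t c)))/r^α := by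
      rw [div_le_div_iff₀ (by positivity) (by positivity)]
      calc 4*(((min s a)^(α/2)*(min s c)^(α/2))*((min t c)^(α/2)*(min t b)^(α/2)))
            *(r^((d:ℝ)-α)*min r a)*r^α
          = ((min s c)^(α/2)*(min t b)^(α/2)*((min r a)^(1-α/2)*r^(α-1)))
            * ((4*((min s a)^(α/2)*((min t c)^(α/2)*(min r a)^(α/2))))*r^((d:ℝ)+1-α)) := by
            linear_combination
              (4*((min s a)^(α/2)*(min s c)^(α/2))*((min t c)^(α/2)*(min t b)^(α/2))*(min r a))*erA
              - (4*((min s a)^(α/2)*(min s c)^(α/2))*((min t c)^(α/2)*(min t b)^(α/2))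
                  *(r^(α-1)*r^((d:ℝ)+1-α)))*em5
        _ ≤ (32*((min r b)^(α/2)*((min s a)^(1-α/2)*((min t c)^(1-α/2)*(s^(α-1)*t^(α-1))))))
            * ((4*((min s a)^(α/2)*((min t c)^(α/2)*(min r a)^(α/2))))*r^((d:ℝ)+1-α)) :=
            mul_le_mul_of_nonneg_right hKEYm (by positivity)
        _ = (128*(min s a*(min t c*((min r a)^(α/2)*(min r b)^(α/2)))))
            * (s^(α-1)*(t^(α-1)*r^((d:ℝ)+1-α))) := by
            linear_combination
              (128*((min r b)^(α/2)*(min r a)^(α/2))*(s^(α-1)*(t^(α-1)*r^((d:ℝ)+1-α)))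
                *((min t c)^(1-α/2)*(min t c)^(α/2)))*em1
              + (128*((min r b)^(α/2)*(min r a)^(α/2))*(s^(α-1)*(t^(α-1)*r^((d:ℝ)+1-α)))
                  *(min s a))*em3
        _ ≤ (128*(min s a*(min t c*((min r a)^(α/2)*(min r b)^(α/2)))))
            * (s^(α-1)*(t^(α-1)*(2^d*s^((d:ℝ)+1-α)))) := by
            apply mul_le_mul_of_nonneg_left _ (by positivity)
            apply mul_le_mul_of_nonneg_left _ (by positivity)
            apply mul_le_mul_of_nonneg_left hfinS (by positivity)
        _ = (128*(2^d:ℝ)) * ((min s a*(min t c*((min r a)^(α/2)*(min r b)^(α/2))))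
            * (s^(α-1)*(t^(α-1)*s^((d:ℝ)+1-α)))) := by ring
        _ ≤ (2^(d+8):ℝ) * ((min s a*(min t c*((min r a)^(α/2)*(min r b)^(α/2))))
            * (s^(α-1)*(t^(α-1)*s^((d:ℝ)+1-α)))) := by
            apply mul_le_mul_of_nonneg_right _ (by positivity)
            rw [pow_add]
            have h2d : (0:ℝ) < 2^d := by positivity
            nlinarith
        _ = 2^(d+8)*((min r a)^(α/2)*(min r b)^(α/2))*t^(-((d:ℝ)+1-α))
            *((s^((d:ℝ)-α)*min s a)*(t^((d:ℝ)-α)*min t c))*(s^α*t^α) := by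
            linear_combination
              (-(2^(d+8)*((min r a)^(α/2)*(min r b)^(α/2))*(min s a*min t c))
                *(s^((d:ℝ)-α)*s^α))*etA
              - (2^(d+8)*((min r a)^(α/2)*(min r b)^(α/2))*(min s a*min t c)*t^(α-1))*esd
    have step3 : (2^(d+8)*((min r a)^(α/2)*(min r b)^(α/2))*t^(-((d:ℝ)+1-α))
          *((s^((d:ℝ)-α)*min s a)*(t^((d:ℝ)-α)*min t c)))/r^α
        ≤ 2^(d+8)*(min 1 (a*b/r^2))^(α/2)*t^(-((d:ℝ)+1-α))
          *((s^((d:ℝ)-α)*min s a)*(t^((d:ℝ)-α)*min t c)) := by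
      have e : (2^(d+8)*((min r a)^(α/2)*(min r b)^(α/2))*t^(-((d:ℝ)+1-α))
            *((s^((d:ℝ)-α)*min s a)*(t^((d:ℝ)-α)*min t c)))/r^α
          = (2^(d+8)*t^(-((d:ℝ)+1-α))*((s^((d:ℝ)-α)*min s a)*(t^((d:ℝ)-α)*min t c)))
            *((min r a)^(α/2)*(min r b)^(α/2)/r^α) := by ring
      rw [e]
      calc (2^(d+8)*t^(-((d:ℝ)+1-α))*((s^((d:ℝ)-α)*min s a)*(t^((d:ℝ)-α)*min t c)))
            *((min r a)^(α/2)*(min r b)^(α/2)/r^α)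
          ≤ (2^(d+8)*t^(-((d:ℝ)+1-α))*((s^((d:ℝ)-α)*min s a)*(t^((d:ℝ)-α)*min t c)))
            *(min 1 (a*b/r^2))^(α/2) := mul_le_mul_of_nonneg_left hXb3 (by positivity)
        _ = _ := by ring
    have main_le := le_trans step1 (le_trans core step3)
    have hS0 : 0 ≤ 2^(d+8)*(min 1 (a*b/r^2))^(α/2)*s^(-((d:ℝ)+1-α))
        *((s^((d:ℝ)-α)*min s a)*(t^((d:ℝ)-α)*min t c)) := by positivity
    have hsplit : 2^(d+8)*(min 1 (a*b/r^2))^(α/2)*(s^(-((d:ℝ)+1-α)) + t^(-((d:ℝ)+1-α)))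
          *((s^((d:ℝ)-α)*min s a)*(t^((d:ℝ)-α)*min t c))
        = 2^(d+8)*(min 1 (a*b/r^2))^(α/2)*s^(-((d:ℝ)+1-α))
            *((s^((d:ℝ)-α)*min s a)*(t^((d:ℝ)-α)*min t c))
          + 2^(d+8)*(min 1 (a*b/r^2))^(α/2)*t^(-((d:ℝ)+1-α))
            *((s^((d:ℝ)-α)*min s a)*(t^((d:ℝ)-α)*min t c)) := by ring
    linarith

end ThreeGHelpers

theorem threeG_gradient_estimate
    (d : ℕ) (hd : 2 ≤ d) (α : ℝ) (hα : α ∈ Set.Ioo (1 : ℝ) 2) :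
    ∃ C : ℝ, 0 < C ∧
      ∀ (D : Set (EuclideanSpace ℝ (Fin d))),
        D.Nonempty → Bornology.IsBounded D → IsOpen D →
        ∀ x ∈ D, ∀ y ∈ D, ∀ z ∈ D, x ≠ y → x ≠ z → y ≠ z →
          (greenG d α D x z / min (dist x z) (Metric.infDist x Dᶜ))
              * (greenG d α D z y / min (dist z y) (Metric.infDist z Dᶜ))
            ≤ C * (greenG d α D x y / min (dist x y) (Metric.infDist x Dᶜ))
              * (dist x z ^ (-((d : ℝ) + 1 - α)) + dist z y ^ (-((d : ℝ) + 1 - α))) := by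
  refine ⟨2^(d+8), by positivity, ?_⟩
  intro D hne hbdd hop x hx y hy z hz hxy hxz hyz
  haveI : Nonempty (Fin d) := ⟨⟨0, by omega⟩⟩
  have hDc : Dᶜ.Nonempty := by
    rcases eq_empty_or_nonempty Dᶜ with h | h
    · exfalso
      have hD : D = univ := by rwa [compl_empty_iff] at h
      rw [hD] at hbdd
      exact NormedSpace.unbounded_univ ℝ (EuclideanSpace ℝ (Fin d)) hbdd
    · exact h
  have hcl : IsClosed Dᶜ := hop.isClosed_compl
  have ha : 0 < Metric.infDist x Dᶜ :=
    (hcl.notMem_iff_infDist_pos hDc).1 (by simp [hx])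
  have hb : 0 < Metric.infDist y Dᶜ :=
    (hcl.notMem_iff_infDist_pos hDc).1 (by simp [hy])
  have hc : 0 < Metric.infDist z Dᶜ :=
    (hcl.notMem_iff_infDist_pos hDc).1 (by simp [hz])
  have hr : 0 < dist x y := dist_pos.mpr hxy
  have hs : 0 < dist x z := dist_pos.mpr hxz
  have ht : 0 < dist z y := dist_pos.mpr fun h => hyz h.symm
  have hba : Metric.infDist y Dᶜ ≤ Metric.infDist x Dᶜ + dist x y := by
    have := Metric.infDist_le_infDist_add_dist (x := y) (y := x) (s := Dᶜ)
    rwa [dist_comm] at this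
  have hab : Metric.infDist x Dᶜ ≤ Metric.infDist y Dᶜ + dist x y :=
    Metric.infDist_le_infDist_add_dist
  have hacs : Metric.infDist x Dᶜ ≤ Metric.infDist z Dᶜ + dist x z :=
    Metric.infDist_le_infDist_add_dist
  have hcas : Metric.infDist z Dᶜ ≤ Metric.infDist x Dᶜ + dist x z := by
    have := Metric.infDist_le_infDist_add_dist (x := z) (y := x) (s := Dᶜ)
    rwa [dist_comm] at this
  have hcbt : Metric.infDist z Dᶜ ≤ Metric.infDist y Dᶜ + dist z y :=
    Metric.infDist_le_infDist_add_dist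
  have hbct : Metric.infDist y Dᶜ ≤ Metric.infDist z Dᶜ + dist z y := by
    have := Metric.infDist_le_infDist_add_dist (x := y) (y := z) (s := Dᶜ)
    rwa [dist_comm] at this
  have htri : dist x y ≤ dist x z + dist z y := dist_triangle x z y
  exact master d hd hα.1 hα.2 ha hb hc hr hs ht hba hab hacs hcas hcbt hbct htri
end
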